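/- arXiv:math/0503480 — 4 statements merged into one kernel-verified Lean document; each statement's English description precedes it below -/
import Mathlib

section
/- If G is a nontrivial Salem graph, then τ(G) is a Salem number. -/
open Polynomial

/-- The multiset of eigenvalues of the adjacency matrix of a finite simple graph. -/
noncomputable def adjEigs {V : Type} [Fintype V] (G : SimpleGraph V) : Multiset ℝ :=
  letI := Classical.decEq V
  letI := Classical.decRel G.Adj
  ((SimpleGraph.adjMatrix ℝ G).charpoly).roots
/-- A Salem number: a real algebraic integer `τ > 1` whose conjugates other than `τ`
all have modulus at most 1, with at least one conjugate of modulus exactly 1. -/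
def IsSalem (τ : ℝ) : Prop :=
  1 < τ ∧ ∃ p : Polynomial ℤ, p.Monic ∧ Irreducible p ∧
    Polynomial.aeval (τ : ℂ) p = 0 ∧
    (∀ z : ℂ, Polynomial.aeval z p = 0 → z ≠ (τ : ℂ) → ‖z‖ ≤ 1) ∧
    (∃ z : ℂ, Polynomial.aeval z p = 0 ∧ ‖z‖ = 1)

/-- A Pisot number: a real algebraic integer `θ > 1` whose conjugates other than `θ`
all have modulus strictly less than 1. -/
def IsPisot (θ : ℝ) : Prop :=
  1 < θ ∧ ∃ p : Polynomial ℤ, p.Monic ∧ Irreducible p ∧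
    Polynomial.aeval (θ : ℂ) p = 0 ∧
    (∀ z : ℂ, Polynomial.aeval z p = 0 → z ≠ (θ : ℂ) → ‖z‖ < 1)
/-- A Salem graph, together with its index `lam`: `lam` is the largest eigenvalue,
`lam > 2` is the only eigenvalue greater than 2, and either the graph is nonbipartite
with no eigenvalue below `-2`, or bipartite with `-lam` its only eigenvalue below `-2`. -/
def IsSalemGraph {V : Type} [Fintype V] (G : SimpleGraph V) (lam : ℝ) : Prop :=
  lam ∈ adjEigs G ∧ (∀ μ ∈ adjEigs G, μ ≤ lam) ∧ 2 < lam ∧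
  Multiset.card ((adjEigs G).filter (fun μ => 2 < μ)) = 1 ∧
  ((¬ G.Colorable 2 ∧ ∀ μ ∈ adjEigs G, -2 ≤ μ) ∨
   (G.Colorable 2 ∧ ∀ μ ∈ adjEigs G, μ < -2 → μ = -lam))

/-- A trivial Salem graph: nonbipartite with `lam ∈ ℤ`, or bipartite with `lam² ∈ ℤ`. -/
def IsTrivialSalemGraph {V : Type} [Fintype V] (G : SimpleGraph V) (lam : ℝ) : Prop :=
  (¬ G.Colorable 2 ∧ ∃ k : ℤ, lam = k) ∨ (G.Colorable 2 ∧ ∃ k : ℤ, lam ^ 2 = k)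

/-- The defining relation for `τ(G)`, the Salem number associated to a Salem graph:
`τ > 1` with `τ + 1/τ = lam` in the nonbipartite case, `√τ + 1/√τ = lam` in the
bipartite case. -/
def IsGraphSalemTau {V : Type} [Fintype V] (G : SimpleGraph V) (lam t : ℝ) : Prop :=
  1 < t ∧ ((¬ G.Colorable 2 ∧ t + 1 / t = lam) ∨
           (G.Colorable 2 ∧ Real.sqrt t + 1 / Real.sqrt t = lam))

set_option maxHeartbeats 1000000
set_option synthInstance.maxHeartbeats 400000
open scoped ComplexOrder
open IntermediateField

section Helpers

section
variable {V : Type} [Fintype V] (G : SimpleGraph V)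

-- adjacency matrix over ℂ as map of real one, and hermitian-ness
lemma adj_herm [DecidableEq V] [DecidableRel G.Adj] :
    Matrix.conjTranspose (SimpleGraph.adjMatrix ℂ G) = SimpleGraph.adjMatrix ℂ G := by
  ext i j
  simp [Matrix.conjTranspose_apply, SimpleGraph.adjMatrix_apply, G.adj_comm i j, apply_ite]

lemma adj_map [DecidableEq V] [DecidableRel G.Adj] (R S : Type) [CommRing R] [CommRing S]
    (f : R →+* S) :
    (SimpleGraph.adjMatrix R G).map f = SimpleGraph.adjMatrix S G := by
  ext i j
  simp [SimpleGraph.adjMatrix_apply, apply_ite f]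

lemma charpoly_eval [DecidableEq V] (M : Matrix V V ℂ) (z : ℂ) :
    M.charpoly.eval z = ((z • (1 : Matrix V V ℂ)) - M).det := by
  rw [Matrix.charpoly, ← Polynomial.coe_evalRingHom, RingHom.map_det]
  congr 1
  ext i j
  by_cases h : i = j
  · subst h; simp [Matrix.charmatrix_apply_eq, Matrix.map_apply, Matrix.smul_apply,
      Matrix.one_apply, Matrix.sub_apply]
  · simp [Matrix.charmatrix_apply_ne _ _ _ h, Matrix.map_apply, Matrix.smul_apply,
      Matrix.one_apply_ne h, Matrix.sub_apply, h]

lemma root_charpoly_real (z : ℂ) :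
    letI := Classical.decEq V
    letI := Classical.decRel G.Adj
    (SimpleGraph.adjMatrix ℂ G).charpoly.eval z = 0 → ∃ μ : ℝ, z = (μ:ℂ) ∧ μ ∈ adjEigs G := by
  letI := Classical.decEq V
  letI := Classical.decRel G.Adj
  intro hz
  set M := SimpleGraph.adjMatrix ℂ G with hM
  have hz' := hz
  rw [charpoly_eval] at hz
  have hdet : ((z • (1 : Matrix V V ℂ)) - M).det = 0 := hz
  obtain ⟨v, hv0, hv⟩ := (Matrix.exists_mulVec_eq_zero_iff).mpr hdet
  have hMv : M.mulVec v = z • v := by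
    have h2 := hv
    rw [Matrix.sub_mulVec, Matrix.smul_mulVec, Matrix.one_mulVec, sub_eq_zero] at h2
    exact h2.symm
  -- z is real
  have hcz : (starRingEnd ℂ) z = z := by
    have hq1 : dotProduct (star v) (M.mulVec v) = z * dotProduct (star v) v := by
      rw [hMv, dotProduct_smul]; simp [smul_eq_mul]
    have hq2 : dotProduct (star v) (M.mulVec v)
        = (starRingEnd ℂ) z * dotProduct (star v) v := by
      rw [Matrix.dotProduct_mulVec]
      have : Matrix.vecMul (star v) M = star (M.mulVec v) := by
        rw [Matrix.star_mulVec, adj_herm]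
      rw [this, hMv, star_smul]
      simp [smul_dotProduct, smul_eq_mul, Complex.star_def]
    have hc0 : dotProduct (star v) v ≠ 0 := by
      intro h
      exact hv0 (dotProduct_star_self_eq_zero.mp h)
    have := hq1.symm.trans hq2
    exact mul_right_cancel₀ hc0 this.symm
  obtain ⟨r, hzr⟩ : ∃ r : ℝ, z = (r : ℂ) := ⟨z.re, (Complex.conj_eq_iff_re.mp hcz).symm⟩
  refine ⟨r, hzr, ?_⟩
  -- transfer to real charpoly
  have hmapc : (SimpleGraph.adjMatrix ℝ G).map (algebraMap ℝ ℂ) = M := adj_map G ℝ ℂ _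
  have hcp : M.charpoly = (SimpleGraph.adjMatrix ℝ G).charpoly.map (algebraMap ℝ ℂ) := by
    rw [← hmapc, Matrix.charpoly_map]
  rw [hcp, hzr] at hz'
  have : (SimpleGraph.adjMatrix ℝ G).charpoly.eval r = 0 := by
    have h3 := hz'
    rw [show ((r:ℂ)) = algebraMap ℝ ℂ r from rfl, Polynomial.eval_map,
      Polynomial.eval₂_at_apply] at h3
    exact (map_eq_zero_iff (algebraMap ℝ ℂ) (algebraMap ℝ ℂ).injective).mp h3
  show r ∈ ((SimpleGraph.adjMatrix ℝ G).charpoly).roots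
  rw [Polynomial.mem_roots ((Matrix.charpoly_monic _).ne_zero)]
  exact this
end

section
variable {V : Type} [Fintype V] (G : SimpleGraph V)

lemma adj_map' [DecidableEq V] [DecidableRel G.Adj] (R S : Type) [CommRing R] [CommRing S]
    (f : R →+* S) :
    (SimpleGraph.adjMatrix R G).map f = SimpleGraph.adjMatrix S G := by
  ext i j
  simp [SimpleGraph.adjMatrix_apply, apply_ite f]

lemma lam_integral {lam : ℝ} (hmem : lam ∈ adjEigs G) : IsIntegral ℤ lam := by
  letI := Classical.decEq V
  letI := Classical.decRel G.Adj
  refine ⟨(SimpleGraph.adjMatrix ℤ G).charpoly, Matrix.charpoly_monic _, ?_⟩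
  have hmap : ((SimpleGraph.adjMatrix ℤ G).charpoly).map (algebraMap ℤ ℝ)
      = (SimpleGraph.adjMatrix ℝ G).charpoly := by
    rw [← Matrix.charpoly_map, adj_map']
  have hroot : (SimpleGraph.adjMatrix ℝ G).charpoly.eval lam = 0 :=
    Polynomial.isRoot_of_mem_roots hmem
  rw [← Polynomial.eval_map, hmap]
  exact hroot

lemma conj_eig {lam : ℝ} (hmem : lam ∈ adjEigs G) :
    ∀ z : ℂ, Polynomial.aeval z (minpoly ℚ ((lam : ℝ) : ℂ)) = 0 →
      ∃ μ : ℝ, z = (μ : ℂ) ∧ μ ∈ adjEigs G := by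
  letI := Classical.decEq V
  letI := Classical.decRel G.Adj
  intro z hz
  set q : ℚ[X] := (SimpleGraph.adjMatrix ℚ G).charpoly with hq
  have hmapR : q.map (algebraMap ℚ ℝ) = (SimpleGraph.adjMatrix ℝ G).charpoly := by
    rw [hq, ← Matrix.charpoly_map, adj_map']
  have hmapC : q.map (algebraMap ℚ ℂ) = (SimpleGraph.adjMatrix ℂ G).charpoly := by
    rw [hq, ← Matrix.charpoly_map, adj_map']
  have haev : Polynomial.aeval ((lam : ℝ) : ℂ) q = 0 := by
    have h1 : (SimpleGraph.adjMatrix ℝ G).charpoly.eval lam = 0 :=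
      Polynomial.isRoot_of_mem_roots hmem
    have h2 : Polynomial.aeval lam q = 0 := by
      rw [Polynomial.aeval_def, Polynomial.eval₂_eq_eval_map, hmapR]
      exact h1
    have h3 : Polynomial.aeval ((lam : ℝ) : ℂ) q
        = algebraMap ℝ ℂ (Polynomial.aeval lam q) := by
      rw [← Polynomial.aeval_algebraMap_apply]
      rfl
    rw [h3, h2, map_zero]
  have hdvd : minpoly ℚ ((lam : ℝ) : ℂ) ∣ q := minpoly.dvd ℚ _ haev
  obtain ⟨c, hc⟩ := hdvd
  have hzq : Polynomial.aeval z q = 0 := by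
    rw [hc, map_mul, hz, zero_mul]
  have hzc : (SimpleGraph.adjMatrix ℂ G).charpoly.eval z = 0 := by
    rw [← hmapC, ← Polynomial.eval₂_eq_eval_map, ← Polynomial.aeval_def]
    exact hzq
  exact root_charpoly_real G z hzc

lemma eig_le2 {lam : ℝ} (hmem : lam ∈ adjEigs G) (hlam2 : 2 < lam)
    (hcard : Multiset.card ((adjEigs G).filter (fun μ => 2 < μ)) = 1) :
    ∀ μ ∈ adjEigs G, μ ≠ lam → μ ≤ 2 := by
  intro μ hμ hne
  by_contra h
  push_neg at h
  obtain ⟨a, ha⟩ := Multiset.card_eq_one.mp hcard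
  have h1 : lam ∈ (adjEigs G).filter (fun μ => 2 < μ) := Multiset.mem_filter.mpr ⟨hmem, hlam2⟩
  have h2 : μ ∈ (adjEigs G).filter (fun μ => 2 < μ) := Multiset.mem_filter.mpr ⟨hμ, h⟩
  rw [ha, Multiset.mem_singleton] at h1 h2
  exact hne (h2.trans h1.symm)

end

lemma exists_second_root {θ : ℝ} (hint : IsIntegral ℤ θ) (hnot : ¬∃ k : ℤ, θ = (k : ℝ)) :
    ∃ w : ℂ, Polynomial.aeval w (minpoly ℚ ((θ : ℝ) : ℂ)) = 0 ∧ w ≠ ((θ : ℝ) : ℂ) := by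
  set θc : ℂ := ((θ : ℝ) : ℂ) with hθc
  have hintQ : IsIntegral ℚ θc := by
    have : θc = algebraMap ℝ ℂ θ := rfl
    rw [this]
    exact (hint.tower_top (A := ℚ)).map (IsScalarTower.toAlgHom ℚ ℝ ℂ)
  set q : ℚ[X] := minpoly ℚ θc with hq
  have hdeg : 2 ≤ q.natDegree := by
    rw [hq, minpoly.two_le_natDegree_iff hintQ]
    rintro ⟨r, hr⟩
    have hrθ : ((r : ℝ) : ℂ) = θc := by
      rw [← hr]
      push_cast
      rfl
    have hθr : θ = (r : ℝ) := by
      have := Complex.ofReal_injective hrθ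
      exact this.symm
    have hrint : IsIntegral ℤ r := by
      have h1 : IsIntegral ℤ ((r : ℝ)) := hθr ▸ hint
      exact (isIntegral_algebraMap_iff (algebraMap ℚ ℝ).injective).mp (by
        have : algebraMap ℚ ℝ r = ((r : ℝ)) := rfl
        rw [this]; exact h1)
    obtain ⟨k, hk⟩ := IsIntegrallyClosed.isIntegral_iff.mp hrint
    refine hnot ⟨k, ?_⟩
    rw [hθr, ← hk]
    push_cast
    rfl
  have hsep : q.Separable := (minpoly.irreducible hintQ).separable
  have hsplits : (q.map (algebraMap ℚ ℂ)).Splits := IsAlgClosed.splits _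
  have hcard : 2 ≤ Multiset.card ((q.map (algebraMap ℚ ℂ)).roots) := by
    rw [← hsplits.natDegree_eq_card_roots, Polynomial.natDegree_map]
    exact hdeg
  have hnodup : ((q.map (algebraMap ℚ ℂ)).roots).Nodup :=
    Polynomial.nodup_roots (Polynomial.Separable.map hsep)
  have hexw : ∃ w ∈ (q.map (algebraMap ℚ ℂ)).roots, w ≠ θc := by
    by_contra hall
    push_neg at hall
    have hrep := Multiset.eq_replicate_of_mem hall
    have hcount := (Multiset.nodup_iff_count_le_one.mp hnodup) θc
    rw [hrep, Multiset.count_replicate_self] at hcount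
    omega
  obtain ⟨w, hwmem, hwne⟩ := hexw
  refine ⟨w, ?_, hwne⟩
  rw [Polynomial.aeval_def, Polynomial.eval₂_eq_eval_map]
  exact Polynomial.isRoot_of_mem_roots hwmem

lemma my_exists_algHom {a : ℂ} (ha : IsIntegral ℚ a) {b w : ℂ}
    (hb : b ∈ ℚ⟮a⟯) (hw : Polynomial.aeval w (minpoly ℚ b) = 0) :
    ∃ σ : ℚ⟮a⟯ →ₐ[ℚ] ℂ, σ ⟨b, hb⟩ = w :=
  exists_algHom_adjoin_of_splits_of_aeval
    (fun s hs => ⟨(Set.mem_singleton_iff.mp hs) ▸ ha, IsAlgClosed.splits _⟩) hb hw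

lemma algHom_root {E : IntermediateField ℚ ℂ} (σ : E →ₐ[ℚ] ℂ) (x : E) :
    Polynomial.aeval (σ x) (minpoly ℚ (x : ℂ)) = 0 := by
  have h1 : minpoly ℚ ((x : ℂ)) = minpoly ℚ x :=
    minpoly.algebraMap_eq (algebraMap E ℂ).injective x
  rw [h1, Polynomial.aeval_algHom_apply, minpoly.aeval, map_zero]

lemma quad_roots {z a : ℂ} (hz : z ≠ 0) (ha : a ≠ 0) (h : z + z⁻¹ = a + a⁻¹) :
    z = a ∨ z = a⁻¹ := by
  have e1 : a * a⁻¹ = 1 := mul_inv_cancel₀ ha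
  have e2 : z * z⁻¹ = 1 := mul_inv_cancel₀ hz
  have h2 : (z - a) * (z - a⁻¹) = 0 := by linear_combination z * h + e1 - e2
  rcases mul_eq_zero.mp h2 with h3 | h3
  · exact Or.inl (sub_eq_zero.mp h3)
  · exact Or.inr (sub_eq_zero.mp h3)

lemma abs_eq_one_of_quad {z : ℂ} {μ : ℝ} (hz : z ≠ 0) (h : z + z⁻¹ = (μ : ℂ))
    (hμ : |μ| ≤ 2) : ‖z‖ = 1 := by
  have e2 : z * z⁻¹ = 1 := mul_inv_cancel₀ hz
  have hq : z ^ 2 - (μ : ℂ) * z + 1 = 0 := by linear_combination z * h - e2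
  by_cases hr : (starRingEnd ℂ) z = z
  · have hzre : ((z.re : ℂ)) = z := Complex.conj_eq_iff_re.mp hr
    set r := z.re with hrdef
    have hc : ((r ^ 2 - μ * r + 1 : ℝ) : ℂ) = 0 := by push_cast; rw [hzre]; exact hq
    have hre : r ^ 2 - μ * r + 1 = 0 := by exact_mod_cast hc
    have h1 : μ * r ≤ 2 * |r| := by
      calc μ * r ≤ |μ * r| := le_abs_self _
        _ = |μ| * |r| := abs_mul _ _
        _ ≤ 2 * |r| := by nlinarith [abs_nonneg r]
    have key : (|r| - 1) ^ 2 ≤ 0 := by nlinarith [sq_abs r]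
    have h0 : (|r| - 1) ^ 2 = 0 := le_antisymm key (sq_nonneg _)
    have h3 : |r| = 1 := by
      have := pow_eq_zero_iff two_ne_zero |>.mp h0
      linarith
    rw [← hzre, Complex.norm_real, Real.norm_eq_abs]
    exact h3
  · have hqc : (starRingEnd ℂ) z ^ 2 - (μ : ℂ) * (starRingEnd ℂ) z + 1 = 0 := by
      have := congrArg (starRingEnd ℂ) hq
      simpa using this
    have hsum : z + (starRingEnd ℂ) z = (μ : ℂ) := by
      have hd : (z - (starRingEnd ℂ) z) * (z + (starRingEnd ℂ) z - (μ:ℂ)) = 0 := by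
        linear_combination hq - hqc
      rcases mul_eq_zero.mp hd with h3 | h3
      · exact absurd (sub_eq_zero.mp h3).symm hr
      · linear_combination h3
    have hprod : z * (starRingEnd ℂ) z = 1 := by
      linear_combination z * hsum - hq
    have hsq : ((Complex.normSq z : ℝ) : ℂ) = 1 := by rw [← Complex.mul_conj]; exact hprod
    have : Complex.normSq z = 1 := by exact_mod_cast hsq
    rw [Complex.norm_def, this, Real.sqrt_one]

lemma t_integral {θ t : ℝ} (hint : IsIntegral ℤ θ) (hrel : t ^ 2 - θ * t + 1 = 0) :
    IsIntegral ℤ t := by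
  let A : Subalgebra ℤ ℝ := Algebra.adjoin ℤ {θ}
  haveI : Algebra.IsIntegral ℤ A := Algebra.IsIntegral.adjoin (by
    rintro x hx
    rw [Set.mem_singleton_iff] at hx
    subst hx
    exact hint)
  have hθA : θ ∈ A := Algebra.subset_adjoin (Set.mem_singleton θ)
  have hA : IsIntegral A t := by
    refine ⟨X ^ 2 + (C (-(⟨θ, hθA⟩ : A)) * X + C 1), ?_, ?_⟩
    · apply Polynomial.Monic.add_of_left (monic_X_pow 2)
      rw [degree_X_pow]
      exact lt_of_le_of_lt (degree_linear_le) (by norm_num)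
    · have hmap : algebraMap A ℝ (⟨θ, hθA⟩ : A) = θ := rfl
      simp only [eval₂_add, eval₂_mul, eval₂_neg, eval₂_C, eval₂_X, eval₂_pow, eval₂_one, map_neg, map_one, hmap]
      linarith [hrel]
  exact isIntegral_trans t hA

lemma salem_core (θ t : ℝ) (hint : IsIntegral ℤ θ)
    (ht : 1 < t) (hrel : t + 1 / t = θ)
    (hconj : ∀ w : ℂ, Polynomial.aeval w (minpoly ℚ ((θ : ℝ) : ℂ)) = 0 →
      w = ((θ : ℝ) : ℂ) ∨ ∃ μ : ℝ, w = (μ : ℂ) ∧ |μ| ≤ 2)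
    (hex : ∃ w : ℂ, Polynomial.aeval w (minpoly ℚ ((θ : ℝ) : ℂ)) = 0 ∧ w ≠ ((θ : ℝ) : ℂ)) :
    IsSalem t := by
  have ht0 : (0 : ℝ) < t := lt_trans one_pos ht
  have htne : t ≠ 0 := ne_of_gt ht0
  have hquad : t ^ 2 - θ * t + 1 = 0 := by
    field_simp at hrel
    nlinarith [hrel]
  have tint : IsIntegral ℤ t := t_integral hint hquad
  have tintQ : IsIntegral ℚ t := tint.tower_top
  set tc : ℂ := ((t : ℝ) : ℂ) with htc
  set θc : ℂ := ((θ : ℝ) : ℂ) with hθc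
  have tcne : tc ≠ 0 := by
    simp [htc, Complex.ofReal_eq_zero, htne]
  have tcint : IsIntegral ℚ tc := by
    have : tc = algebraMap ℝ ℂ t := rfl
    rw [this]
    exact tintQ.map (IsScalarTower.toAlgHom ℚ ℝ ℂ)
  have hrelc : tc + tc⁻¹ = θc := by
    have h5 : ((t + 1/t : ℝ) : ℂ) = θc := by rw [hrel]
    rw [← h5]
    push_cast
    rw [one_div]
  -- θc ∈ ℚ⟮tc⟯
  have htcmem : tc ∈ ℚ⟮tc⟯ := mem_adjoin_simple_self ℚ tc
  have hθmem : θc ∈ ℚ⟮tc⟯ := by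
    rw [← hrelc]
    exact add_mem htcmem (inv_mem htcmem)
  -- minimal polynomials
  set p : ℤ[X] := minpoly ℤ t with hp
  have hmonic : p.Monic := minpoly.monic tint
  have hirr : Irreducible p := minpoly.irreducible tint
  have hQR : minpoly ℚ t = p.map (algebraMap ℤ ℚ) :=
    minpoly.isIntegrallyClosed_eq_field_fractions' ℚ tint
  have hQC : minpoly ℚ tc = minpoly ℚ t := by
    have : tc = algebraMap ℝ ℂ t := rfl
    rw [this]
    exact minpoly.algebraMap_eq (algebraMap ℝ ℂ).injective t
  have hroot_iff : ∀ z : ℂ, Polynomial.aeval z p = 0 ↔ Polynomial.aeval z (minpoly ℚ tc) = 0 := by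
    intro z
    rw [hQC, hQR, Polynomial.aeval_map_algebraMap]
  have hpeval : Polynomial.aeval tc p = 0 := by
    have h1 : Polynomial.aeval t p = 0 := minpoly.aeval ℤ t
    have : Polynomial.aeval tc p = algebraMap ℝ ℂ (Polynomial.aeval t p) := by
      rw [← Polynomial.aeval_algebraMap_apply]
      rfl
    rw [this, h1, map_zero]
  -- classification of roots
  have hclass : ∀ z : ℂ, Polynomial.aeval z p = 0 → z = tc ∨ z = tc⁻¹ ∨ ‖z‖ = 1 := by
    intro z hz
    rw [hroot_iff] at hz
    obtain ⟨σ, hσ⟩ := my_exists_algHom tcint htcmem hz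
    have hzσ : σ ⟨tc, htcmem⟩ = z := hσ
    have hzne : z ≠ 0 := by
      intro h0
      have h1 : σ ⟨tc, htcmem⟩ = 0 := by rw [hzσ, h0]
      have h2 : (⟨tc, htcmem⟩ : ℚ⟮tc⟯) = 0 :=
        (injective_iff_map_eq_zero σ).mp σ.toRingHom.injective _ h1
      exact tcne (by simpa using Subtype.ext_iff.mp h2)
    -- w := z + z⁻¹ is a root of minpoly ℚ θc
    have huw : σ ⟨θc, hθmem⟩ = z + z⁻¹ := by
      have hu : (⟨θc, hθmem⟩ : ℚ⟮tc⟯) = ⟨tc, htcmem⟩ + (⟨tc, htcmem⟩)⁻¹ := by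
        apply Subtype.ext
        push_cast
        rw [← hrelc]
      rw [hu, map_add, hzσ, map_inv₀, hzσ]
    have hwroot : Polynomial.aeval (z + z⁻¹) (minpoly ℚ θc) = 0 := by
      rw [← huw]
      have := algHom_root σ ⟨θc, hθmem⟩
      simpa using this
    rcases hconj _ hwroot with hw | ⟨μ, hwμ, hμ2⟩
    · have := quad_roots hzne tcne (by rw [hw, hrelc])
      tauto
    · right; right
      exact abs_eq_one_of_quad hzne hwμ hμ2
  refine ⟨ht, p, hmonic, hirr, hpeval, ?_, ?_⟩
  · intro z hz hzne
    rcases hclass z hz with h1 | h1 | h1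
    · exact absurd h1 hzne
    · rw [h1]
      rw [norm_inv]
      rw [htc, Complex.norm_real, Real.norm_eq_abs, abs_of_pos ht0]
      rw [inv_le_one₀ ht0]
      linarith
    · rw [h1]
  · obtain ⟨w, hw, hwne⟩ := hex
    rcases hconj w hw with h1 | ⟨μ, hwμ, hμ2⟩
    · exact absurd h1 hwne
    · -- extend embedding and produce root of p on unit circle
      obtain ⟨σ, hσ⟩ := my_exists_algHom tcint hθmem hw
      set z : ℂ := σ ⟨tc, htcmem⟩ with hzdef
      have hzroot : Polynomial.aeval z p = 0 := by
        rw [hroot_iff]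
        have := algHom_root σ ⟨tc, htcmem⟩
        simpa using this
      have hzne : z ≠ 0 := by
        intro h0
        have h2 : (⟨tc, htcmem⟩ : ℚ⟮tc⟯) = 0 :=
          (injective_iff_map_eq_zero σ).mp σ.toRingHom.injective _ (by rw [← hzdef, h0])
        exact tcne (by simpa using Subtype.ext_iff.mp h2)
      have hzw : z + z⁻¹ = w := by
        have hu : (⟨θc, hθmem⟩ : ℚ⟮tc⟯) = ⟨tc, htcmem⟩ + (⟨tc, htcmem⟩)⁻¹ := by
          apply Subtype.ext
          push_cast
          rw [← hrelc]
        rw [← hσ, hu, map_add, map_inv₀]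
      refine ⟨z, hzroot, ?_⟩
      exact abs_eq_one_of_quad hzne (by rw [hzw, hwμ]) hμ2

end Helpers

/-- If `G` is a nontrivial Salem graph, then `τ(G)` is a Salem number. -/
theorem tau_of_nontrivial_salem_graph_is_salem {V : Type} [Fintype V]
    (G : SimpleGraph V) (lam t : ℝ)
    (hG : IsSalemGraph G lam) (hnt : ¬ IsTrivialSalemGraph G lam)
    (ht : IsGraphSalemTau G lam t) : IsSalem t := by

  obtain ⟨hmem, hmax, hlam2, hcard, hcase⟩ := hG
  obtain ⟨ht1, htcase⟩ := ht
  have ht0 : (0 : ℝ) < t := lt_trans one_pos ht1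
  have hlamint : IsIntegral ℤ lam := lam_integral G hmem
  have heig2 := eig_le2 G hmem hlam2 hcard
  rcases hcase with ⟨hnb, hlow⟩ | ⟨hb, hlow⟩
  · -- nonbipartite case
    have hrel : t + 1 / t = lam := by
      rcases htcase with ⟨_, h⟩ | ⟨hb2, _⟩
      · exact h
      · exact absurd hb2 hnb
    have hnotint : ¬∃ k : ℤ, lam = (k : ℝ) := fun ⟨k, hk⟩ => hnt (Or.inl ⟨hnb, k, hk⟩)
    refine salem_core lam t hlamint ht1 hrel ?_ (exists_second_root hlamint hnotint)
    intro w hw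
    obtain ⟨μ, hwμ, hμeig⟩ := conj_eig G hmem w hw
    by_cases hμlam : μ = lam
    · left
      rw [hwμ, hμlam]
    · right
      refine ⟨μ, hwμ, abs_le.mpr ⟨hlow μ hμeig, heig2 μ hμeig hμlam⟩⟩
  · -- bipartite case
    have hrel0 : Real.sqrt t + 1 / Real.sqrt t = lam := by
      rcases htcase with ⟨hnb2, _⟩ | ⟨_, h⟩
      · exact absurd hb hnb2
      · exact h
    set θ : ℝ := lam ^ 2 - 2 with hθdef
    have hs0 : 0 < Real.sqrt t := Real.sqrt_pos.mpr ht0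
    have hs2 : Real.sqrt t ^ 2 = t := Real.sq_sqrt (le_of_lt ht0)
    have hrel : t + 1 / t = θ := by
      rw [hθdef, ← hrel0]
      field_simp
      rw [hs2]; ring
    have h2int : IsIntegral ℤ ((2 : ℝ)) := by
      have := isIntegral_algebraMap (R := ℤ) (A := ℝ) (x := (2 : ℤ))
      simpa using this
    have hθint : IsIntegral ℤ θ := by
      have hsq : IsIntegral ℤ (lam ^ 2) := by
        have := hlamint.mul hlamint
        rwa [← sq] at this
      exact hsq.sub h2int
    have hnotint : ¬∃ k : ℤ, θ = (k : ℝ) := by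
      rintro ⟨k, hk⟩
      refine hnt (Or.inr ⟨hb, k + 2, ?_⟩)
      rw [hθdef] at hk
      push_cast
      linarith
    refine salem_core θ t hθint ht1 hrel ?_ (exists_second_root hθint hnotint)
    intro w hw
    -- conjugates of θ via embeddings of ℚ⟮lamc⟯
    set lamc : ℂ := ((lam : ℝ) : ℂ) with hlamc
    set θc : ℂ := ((θ : ℝ) : ℂ) with hθc
    have hlamcmem : lamc ∈ ℚ⟮lamc⟯ := IntermediateField.mem_adjoin_simple_self ℚ lamc
    have hθcm : θc = lamc ^ 2 - 2 := by
      rw [hθc, hlamc, hθdef]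
      push_cast
      ring
    have hθmem : θc ∈ ℚ⟮lamc⟯ := by
      rw [hθcm]
      exact sub_mem (pow_mem hlamcmem 2) (ofNat_mem _ 2)
    have hlamcint : IsIntegral ℚ lamc := by
      have : lamc = algebraMap ℝ ℂ lam := rfl
      rw [this]
      exact (hlamint.tower_top (A := ℚ)).map (IsScalarTower.toAlgHom ℚ ℝ ℂ)
    obtain ⟨σ, hσ⟩ := my_exists_algHom hlamcint hθmem hw
    have hμroot := algHom_root σ ⟨lamc, hlamcmem⟩
    obtain ⟨μ, hzμ, hμeig⟩ := conj_eig G hmem (σ ⟨lamc, hlamcmem⟩) (by simpa using hμroot)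
    have hwval : w = (μ : ℂ) ^ 2 - 2 := by
      have hsub : (⟨θc, hθmem⟩ : ℚ⟮lamc⟯) = (⟨lamc, hlamcmem⟩ : ℚ⟮lamc⟯) ^ 2 - 2 := by
        apply Subtype.ext
        push_cast
        exact hθcm
      rw [← hσ, hsub, map_sub, map_pow, map_ofNat, hzμ]
    by_cases hμ2 : |μ| ≤ 2
    · right
      refine ⟨μ ^ 2 - 2, ?_, ?_⟩
      · rw [hwval]; push_cast; ring
      · rw [abs_le]
        constructor
        · nlinarith [sq_nonneg μ]
        · nlinarith [sq_abs μ, abs_nonneg μ]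
    · left
      push_neg at hμ2
      have hμsq : μ ^ 2 = lam ^ 2 := by
        rcases lt_abs.mp hμ2 with h | h
        · have : μ = lam := by
            by_contra hne
            exact absurd (heig2 μ hμeig hne) (not_le.mpr h)
          rw [this]
        · have : μ = -lam := hlow μ hμeig (by linarith)
          rw [this]; ring
      rw [hwval, hθc, hθdef]
      have hcast : ((μ ^ 2 - 2 : ℝ) : ℂ) = ((lam ^ 2 - 2 : ℝ) : ℂ) := by
        rw [hμsq]
      push_cast at hcast ⊢
      rw [hcast]
end

section
/- Let G be a bipartite finite simple graph having at least one eigenvalue greater than 2, and suppose there exists a vertex v of G such that the induced subgraph on V(G) − {v} is cyclotomic. Then G is a Salem graph; that is, G has exactly one eigenvalue λ > 2 and its only eigenvalue less than −2 is −λ. -/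
open Polynomial

section Helpers

open Matrix

variable {m : Type*} [Fintype m] [DecidableEq m]

lemma adjEigs_def {V : Type} [Fintype V] [DecidableEq V] (G : SimpleGraph V)
    [DecidableRel G.Adj] :
    adjEigs G = ((SimpleGraph.adjMatrix ℝ G).charpoly).roots := by
  unfold adjEigs
  congr!

lemma adjMatrix_isHermitian {V : Type*} [Fintype V] [DecidableEq V] (G : SimpleGraph V)
    [DecidableRel G.Adj] : (SimpleGraph.adjMatrix ℝ G).IsHermitian := by
  show _ᴴ = _
  ext i j
  simp only [Matrix.conjTranspose_apply, SimpleGraph.adjMatrix_apply, star_trivial]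
  by_cases h : G.Adj i j
  · rw [if_pos h, if_pos (G.adj_symm h)]
  · rw [if_neg h, if_neg (fun h' => h (G.adj_symm h'))]

lemma my_charpoly_eval (M : Matrix m m ℝ) (x : ℝ) :
    M.charpoly.eval x = (Matrix.diagonal (fun _ => x) - M).det := by
  rw [Matrix.charpoly, ← Polynomial.coe_evalRingHom, RingHom.map_det]
  congr 1
  ext i j
  by_cases h : i = j
  · subst h
    simp [Matrix.charmatrix_apply_eq]
  · simp [Matrix.charmatrix_apply_ne _ _ _ h, Matrix.diagonal_apply_ne _ h]

lemma my_charpoly_conj (M U V : Matrix m m ℝ) (hUV : U * V = 1) :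
    (U * M * V).charpoly = M.charpoly := by
  have hmap : ∀ P Q : Matrix m m ℝ, (P * Q).map (C : ℝ →+* ℝ[X]) = P.map C * Q.map C :=
    fun P Q => Matrix.map_mul
  have h1 : Matrix.charmatrix (U * M * V) =
      (U.map (C : ℝ →+* ℝ[X])) * Matrix.charmatrix M * (V.map C) := by
    rw [Matrix.charmatrix, Matrix.charmatrix]
    rw [Matrix.mul_sub, Matrix.sub_mul]
    have hsc : Matrix.scalar m (X : ℝ[X]) = (X : ℝ[X]) • (1 : Matrix m m ℝ[X]) := by
      ext i j
      by_cases h : i = j <;>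
        simp [h, Matrix.scalar_apply, Matrix.diagonal_apply_ne, Matrix.one_apply]
    congr 1
    · rw [hsc, mul_smul_comm, Matrix.smul_mul, mul_one, ← hmap, hUV]
      simp
    · simp only [RingHom.mapMatrix_apply]
      rw [← hmap, ← hmap]
  rw [Matrix.charpoly, h1, Matrix.det_mul, Matrix.det_mul]
  have : (U.map (C : ℝ →+* ℝ[X])).det * (V.map C).det = 1 := by
    rw [← Matrix.det_mul, ← hmap, hUV]
    simp
  calc (U.map (C : ℝ →+* ℝ[X])).det * (Matrix.charmatrix M).det * (V.map C).det
      = (Matrix.charmatrix M).det * ((U.map (C : ℝ →+* ℝ[X])).det * (V.map C).det) := by ring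
    _ = (Matrix.charmatrix M).det := by rw [this, mul_one]

lemma my_charpoly_diagonal (d : m → ℝ) :
    (Matrix.diagonal d).charpoly = ∏ i, (X - C (d i)) := by
  rw [Matrix.charpoly]
  have : Matrix.charmatrix (Matrix.diagonal d) = Matrix.diagonal (fun i => X - C (d i)) := by
    ext i j
    by_cases h : i = j
    · subst h; simp [Matrix.charmatrix_apply_eq]
    · simp [Matrix.charmatrix_apply_ne _ _ _ h, Matrix.diagonal_apply_ne _ h]
  rw [this, Matrix.det_diagonal]

lemma roots_charpoly_eq (M : Matrix m m ℝ) (hM : M.IsHermitian) :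
    M.charpoly.roots = Multiset.map hM.eigenvalues Finset.univ.val := by
  have hd : Matrix.diagonal (RCLike.ofReal ∘ hM.eigenvalues) = Matrix.diagonal hM.eigenvalues := by
    congr 1
  have h1 : M.charpoly = (Matrix.diagonal hM.eigenvalues).charpoly := by
    conv_lhs => rw [hM.spectral_theorem]
    rw [hd]
    exact my_charpoly_conj _ _ _
      (Matrix.mem_unitaryGroup_iff.mp (hM.eigenvectorUnitary).2)
  rw [h1, my_charpoly_diagonal]
  have : ∏ i, (X - C (hM.eigenvalues i)) =
      ((Multiset.map hM.eigenvalues Finset.univ.val).map (fun a => X - C a)).prod := by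
    rw [Multiset.map_map]
    rfl
  rw [this, Polynomial.roots_multiset_prod_X_sub_C]

lemma dot_le_two (B : Matrix m m ℝ) (hB : B.IsHermitian)
    (h2 : ∀ μ ∈ B.charpoly.roots, μ ≤ 2) (y : m → ℝ) :
    y ⬝ᵥ (B *ᵥ y) ≤ 2 * (y ⬝ᵥ y) := by
  set C : Matrix m m ℝ := Matrix.diagonal (fun _ => (2:ℝ)) - B with hCdef
  have hC : C.IsHermitian := by
    have : (Matrix.diagonal (fun _ : m => (2:ℝ))).IsHermitian := Matrix.isHermitian_diagonal _
    exact this.sub hB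
  have hnn : ∀ i, 0 ≤ hC.eigenvalues i := by
    intro i
    set c := hC.eigenvalues i with hc
    have hmem : c ∈ C.charpoly.roots := by
      rw [roots_charpoly_eq C hC]
      exact Multiset.mem_map_of_mem _ (Finset.mem_univ_val _)
    have hroot : C.charpoly.eval c = 0 := (Polynomial.isRoot_of_mem_roots hmem)
    have hroot2 : B.charpoly.eval (2 - c) = 0 := by
      rw [my_charpoly_eval] at hroot ⊢
      have key : Matrix.diagonal (fun _ : m => 2 - c) - B
          = -(Matrix.diagonal (fun _ : m => c) - C) := by
        ext i j
        by_cases h : i = j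
        · subst h
          simp [hCdef, Matrix.diagonal_apply_eq]
          ring
        · simp [hCdef, Matrix.diagonal_apply_ne _ h]
      rw [key, Matrix.det_neg, hroot, mul_zero]
    have hmem2 : (2 - c) ∈ B.charpoly.roots :=
      Polynomial.mem_roots'.mpr ⟨B.charpoly_monic.ne_zero, hroot2⟩
    have := h2 _ hmem2
    linarith
  have hpsd : C.PosSemidef := hC.posSemidef_iff_eigenvalues_nonneg.mpr (fun i => hnn i)
  have h0 := hpsd.dotProduct_mulVec_nonneg y
  have hstar : star y = y := by
    funext k; simp
  rw [hstar] at h0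
  have hCy : y ⬝ᵥ (C *ᵥ y) = 2 * (y ⬝ᵥ y) - y ⬝ᵥ (B *ᵥ y) := by
    rw [hCdef, Matrix.sub_mulVec, dotProduct_sub]
    congr 1
    simp only [dotProduct, Matrix.mulVec_diagonal, Finset.mul_sum]
    exact Finset.sum_congr rfl fun k _ => by ring
  rw [hCy] at h0
  linarith

lemma adjEigs_neg_mem {V : Type} [Fintype V] [DecidableEq V] (G : SimpleGraph V)
    (hbip : G.Colorable 2) {μ : ℝ} (h : μ ∈ adjEigs G) : -μ ∈ adjEigs G := by
  classical
  obtain ⟨c⟩ := hbip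
  letI : DecidableRel G.Adj := Classical.decRel _
  rw [adjEigs_def G] at h ⊢
  set A := SimpleGraph.adjMatrix ℝ G with hAdef
  set d : V → ℝ := fun i => if c i = 0 then 1 else -1 with hddef
  set D : Matrix V V ℝ := Matrix.diagonal d with hDdef
  have hdd : ∀ i, d i * d i = 1 := by
    intro i; by_cases h : c i = 0 <;> simp [hddef, h]
  have hD2 : D * D = 1 := by
    rw [hDdef, Matrix.diagonal_mul_diagonal]
    have : (fun i => d i * d i) = fun _ => (1:ℝ) := by funext i; exact hdd i
    rw [this, Matrix.diagonal_one]
  have hkey : ∀ a b : Fin 2, a ≠ b →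
      (if a = 0 then (1:ℝ) else -1) * (if b = 0 then 1 else -1) = -1 := by
    intro a b hab
    fin_cases a <;> fin_cases b <;> simp_all
  have hDAD : D * A * D = -A := by
    ext i j
    rw [Matrix.neg_apply, hDdef, Matrix.mul_diagonal, Matrix.diagonal_mul]
    by_cases hadj : G.Adj i j
    · have hne := c.valid hadj
      rw [hAdef, SimpleGraph.adjMatrix_apply, if_pos hadj]
      have := hkey _ _ hne
      rw [hddef]
      simp only []
      calc (if c i = 0 then (1:ℝ) else -1) * 1 * (if c j = 0 then 1 else -1)
          = (if c i = 0 then (1:ℝ) else -1) * (if c j = 0 then 1 else -1) := by ring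
        _ = -1 := this
    · rw [hAdef, SimpleGraph.adjMatrix_apply, if_neg hadj]
      ring
  have hch : (-A).charpoly = A.charpoly := by
    rw [← hDAD]
    exact my_charpoly_conj A D D hD2
  have hroot : A.charpoly.eval μ = 0 := Polynomial.isRoot_of_mem_roots h
  have hroot2 : A.charpoly.eval (-μ) = 0 := by
    rw [← hch, my_charpoly_eval]
    rw [my_charpoly_eval] at hroot
    have key : Matrix.diagonal (fun _ : V => -μ) - (-A)
        = -(Matrix.diagonal (fun _ : V => μ) - A) := by
      ext i j
      by_cases h : i = j
      · subst h
        simp only [Matrix.sub_apply, Matrix.neg_apply, Matrix.diagonal_apply_eq]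
        ring
      · simp only [Matrix.sub_apply, Matrix.neg_apply, Matrix.diagonal_apply_ne _ h]
        ring
    rw [key, Matrix.det_neg, hroot, mul_zero]
  exact Polynomial.mem_roots'.mpr ⟨A.charpoly_monic.ne_zero, hroot2⟩

end Helpers
section Main

open Matrix

/-- A bipartite graph with an eigenvalue greater than 2, all of whose eigenvalues after
deleting some vertex `v` lie in `[-2,2]`, is a Salem graph: it has exactly one
eigenvalue `lam > 2` and its only eigenvalue less than `-2` is `-lam`. -/
theorem bipartite_one_vertex_deleted_salem {n : ℕ} (G : SimpleGraph (Fin n))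
    (hbip : G.Colorable 2) (hbig : ∃ μ ∈ adjEigs G, 2 < μ) (v : Fin n)
    (hcyc : ∀ μ ∈ adjEigs (G.induce ((({v}ᶜ : Finset (Fin n)) : Set (Fin n)))),
      -2 ≤ μ ∧ μ ≤ 2) :
    ∃ lam ∈ adjEigs G, 2 < lam ∧
      Multiset.card ((adjEigs G).filter (fun μ => 2 < μ)) = 1 ∧
      ∀ μ ∈ adjEigs G, μ < -2 → μ = -lam := by
  classical
  letI : DecidableRel G.Adj := Classical.decRel _
  set A := SimpleGraph.adjMatrix ℝ G with hAdef
  have hA : A.IsHermitian := adjMatrix_isHermitian G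
  set eig := hA.eigenvalues with heigdef
  have hEigs : adjEigs G = Multiset.map eig Finset.univ.val := by
    rw [adjEigs_def G, roots_charpoly_eq A hA]
  letI : DecidableRel (G.induce ((({v}ᶜ : Finset (Fin n)) : Set (Fin n)))).Adj :=
    Classical.decRel _
  set B := SimpleGraph.adjMatrix ℝ (G.induce ((({v}ᶜ : Finset (Fin n)) : Set (Fin n))))
    with hBdef
  have hB : B.IsHermitian := adjMatrix_isHermitian _
  have hBle : ∀ μ ∈ B.charpoly.roots, μ ≤ 2 := by
    intro μ hμ
    exact (hcyc μ (by rw [adjEigs_def]; exact hμ)).2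
  -- the key interlacing-style claim
  have key : ∀ i j : Fin n, i ≠ j → 2 < eig i → 2 < eig j → False := by
    intro i j hij hi hj
    set E : Fin n → Fin n → ℝ := fun k => ⇑(hA.eigenvectorBasis k) with hEdef
    have hmul : ∀ k, A *ᵥ E k = fun w => eig k * E k w := by
      intro k
      funext w
      calc (A *ᵥ E k) w = (eig k • ⇑(hA.eigenvectorBasis k)) w := by
            rw [hEdef]
            simp only []
            rw [hA.mulVec_eigenvectorBasis k]
        _ = eig k * E k w := rfl
    have hdot : ∀ k l, (∑ w, E k w * E l w) = if k = l then (1:ℝ) else 0 := by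
      intro k l
      have hU := Matrix.mem_unitaryGroup_iff'.mp (hA.eigenvectorUnitary).2
      have h2 := congrArg (fun M : Matrix (Fin n) (Fin n) ℝ => M k l) hU
      simp only [Matrix.mul_apply, Matrix.star_apply, Matrix.one_apply, star_trivial,
        Matrix.IsHermitian.eigenvectorUnitary_apply] at h2
      simpa [hEdef] using h2
    obtain ⟨a, b, hab, hort⟩ : ∃ a b : ℝ, ¬(a = 0 ∧ b = 0) ∧
        a * E i v + b * E j v = 0 := by
      by_cases hz : E i v = 0 ∧ E j v = 0
      · exact ⟨1, 0, by simp, by rw [hz.1]; ring⟩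
      · refine ⟨E j v, -(E i v), ?_, by ring⟩
        rintro ⟨h1, h2⟩
        exact hz ⟨by linarith, h1⟩
    set x : Fin n → ℝ := fun w => a * E i w + b * E j w with hxdef
    have hxv : x v = 0 := hort
    have hAx : A *ᵥ x = fun w => a * (eig i * E i w) + b * (eig j * E j w) := by
      funext w
      calc (A *ᵥ x) w = ∑ u, A w u * x u := rfl
        _ = a * (∑ u, A w u * E i u) + b * (∑ u, A w u * E j u) := by
            rw [Finset.mul_sum, Finset.mul_sum, ← Finset.sum_add_distrib]
            exact Finset.sum_congr rfl fun u _ => by rw [hxdef]; ring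
        _ = a * (A *ᵥ E i) w + b * (A *ᵥ E j) w := rfl
        _ = a * (eig i * E i w) + b * (eig j * E j w) := by rw [hmul i, hmul j]
    have hxA : x ⬝ᵥ (A *ᵥ x) = eig i * (a * a) + eig j * (b * b) := by
      calc x ⬝ᵥ (A *ᵥ x) = ∑ w, x w * ((A *ᵥ x) w) := rfl
        _ = ∑ w, ((a * a * eig i) * (E i w * E i w) + (a * b * eig j) * (E i w * E j w)
            + (b * a * eig i) * (E j w * E i w) + (b * b * eig j) * (E j w * E j w)) := by
            refine Finset.sum_congr rfl fun w _ => ?_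
            rw [hxdef, hAx]
            ring
        _ = eig i * (a * a) + eig j * (b * b) := by
            simp only [Finset.sum_add_distrib, ← Finset.mul_sum, hdot]
            rw [if_neg hij, if_neg (Ne.symm hij)]
            simp only [if_true]
            ring
    have hxx : x ⬝ᵥ x = a * a + b * b := by
      calc x ⬝ᵥ x = ∑ w, x w * x w := rfl
        _ = ∑ w, ((a * a) * (E i w * E i w) + (a * b) * (E i w * E j w)
            + (b * a) * (E j w * E i w) + (b * b) * (E j w * E j w)) := by
            refine Finset.sum_congr rfl fun w _ => ?_
            rw [hxdef]
            ring
        _ = a * a + b * b := by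
            simp only [Finset.sum_add_distrib, ← Finset.mul_sum, hdot]
            rw [if_neg hij, if_neg (Ne.symm hij)]
            simp only [if_true]
            ring
    -- restrict to the complement of v
    have hsum : ∀ f : Fin n → ℝ, f v = 0 →
        (∑ u : (({v}ᶜ : Finset (Fin n)) : Set (Fin n)), f ↑u) = ∑ u, f u := by
      intro f hf
      rw [Finset.sum_finset_coe]
      have h2 := Finset.sum_compl_add_sum ({v} : Finset (Fin n)) f
      rw [Finset.sum_singleton, hf, add_zero] at h2
      exact h2
    set y : (({v}ᶜ : Finset (Fin n)) : Set (Fin n)) → ℝ := fun u => x ↑u with hydef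
    have hyy : y ⬝ᵥ y = x ⬝ᵥ x := by
      calc y ⬝ᵥ y = ∑ u : (({v}ᶜ : Finset (Fin n)) : Set (Fin n)), x ↑u * x ↑u := rfl
        _ = ∑ u, x u * x u := hsum (fun u => x u * x u) (by show x v * x v = 0; rw [hxv]; ring)
        _ = x ⬝ᵥ x := rfl
    have hBapply : ∀ u w : (({v}ᶜ : Finset (Fin n)) : Set (Fin n)),
        B u w = if G.Adj ↑u ↑w then 1 else 0 := by
      intro u w
      rw [hBdef, SimpleGraph.adjMatrix_apply]
      rfl
    have hyB : y ⬝ᵥ (B *ᵥ y) = x ⬝ᵥ (A *ᵥ x) := by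
      calc y ⬝ᵥ (B *ᵥ y)
          = ∑ u : (({v}ᶜ : Finset (Fin n)) : Set (Fin n)),
              (∑ w : (({v}ᶜ : Finset (Fin n)) : Set (Fin n)),
                x ↑u * ((if G.Adj ↑u ↑w then (1:ℝ) else 0) * x ↑w)) := by
            refine Finset.sum_congr rfl fun u _ => ?_
            have h1 : (B *ᵥ y) u = ∑ w, B u w * x ↑w := rfl
            rw [h1, Finset.mul_sum]
            refine Finset.sum_congr rfl fun w _ => ?_
            rw [hBapply u w]
        _ = ∑ u : (({v}ᶜ : Finset (Fin n)) : Set (Fin n)),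
              (∑ w, x ↑u * ((if G.Adj ↑u w then (1:ℝ) else 0) * x w)) := by
            refine Finset.sum_congr rfl fun u _ => ?_
            exact hsum (fun w => x ↑u * ((if G.Adj ↑u w then (1:ℝ) else 0) * x w))
              (by show x ↑u * ((if G.Adj ↑u v then (1:ℝ) else 0) * x v) = 0; rw [hxv]; ring)
        _ = ∑ u, (∑ w, x u * ((if G.Adj u w then (1:ℝ) else 0) * x w)) := by
            refine hsum (fun u => ∑ w, x u * ((if G.Adj u w then (1:ℝ) else 0) * x w)) ?_
            simp [hxv]
        _ = x ⬝ᵥ (A *ᵥ x) := by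
            refine (Finset.sum_congr rfl fun u _ => ?_).symm
            have h1 : (A *ᵥ x) u = ∑ w, A u w * x w := rfl
            rw [h1, Finset.mul_sum]
            refine Finset.sum_congr rfl fun w _ => ?_
            rw [hAdef, SimpleGraph.adjMatrix_apply]
    have hab2 : 0 < a * a + b * b := by
      rcases not_and_or.mp hab with h | h
      · nlinarith [mul_self_pos.mpr h, mul_self_nonneg b]
      · nlinarith [mul_self_pos.mpr h, mul_self_nonneg a]
    have h1 : 2 * (x ⬝ᵥ x) < x ⬝ᵥ (A *ᵥ x) := by
      rw [hxx, hxA]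
      have hmin : 2 < min (eig i) (eig j) := lt_min hi hj
      have hA1 : min (eig i) (eig j) * (a * a) ≤ eig i * (a * a) :=
        mul_le_mul_of_nonneg_right (min_le_left _ _) (mul_self_nonneg a)
      have hA2 : min (eig i) (eig j) * (b * b) ≤ eig j * (b * b) :=
        mul_le_mul_of_nonneg_right (min_le_right _ _) (mul_self_nonneg b)
      have h3 := mul_lt_mul_of_pos_right hmin hab2
      rw [mul_add] at h3
      linarith
    have h2 : y ⬝ᵥ (B *ᵥ y) ≤ 2 * (y ⬝ᵥ y) := dot_le_two B hB hBle y
    rw [hyB, hyy] at h2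
    linarith
  -- counting
  set F : Finset (Fin n) := Finset.univ.filter (fun i => 2 < eig i) with hFdef
  have hcount : Multiset.card ((adjEigs G).filter (fun μ => 2 < μ)) = F.card := by
    rw [hEigs, ← Multiset.countP_eq_card_filter, Multiset.countP_map]
    rfl
  have hne : F.Nonempty := by
    obtain ⟨μ, hμmem, hμ⟩ := hbig
    rw [hEigs] at hμmem
    obtain ⟨i, _, rfl⟩ := Multiset.mem_map.mp hμmem
    exact ⟨i, Finset.mem_filter.mpr ⟨Finset.mem_univ _, hμ⟩⟩
  have hle1 : F.card ≤ 1 := by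
    refine Finset.card_le_one.mpr fun i hi j hj => ?_
    by_contra hij
    exact key i j hij (Finset.mem_filter.mp hi).2 (Finset.mem_filter.mp hj).2
  have hcard : F.card = 1 := le_antisymm hle1 (Finset.card_pos.mpr hne)
  obtain ⟨i₀, hF⟩ := Finset.card_eq_one.mp hcard
  have hi₀ : 2 < eig i₀ := by
    have : i₀ ∈ F := hF ▸ Finset.mem_singleton_self i₀
    exact (Finset.mem_filter.mp this).2
  refine ⟨eig i₀, ?_, hi₀, ?_, ?_⟩
  · rw [hEigs]
    exact Multiset.mem_map_of_mem _ (Finset.mem_univ_val _)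
  · rw [hcount, hcard]
  · intro μ hμ hlt
    have hneg : -μ ∈ adjEigs G := adjEigs_neg_mem G hbip hμ
    rw [hEigs] at hneg
    obtain ⟨j, _, hj⟩ := Multiset.mem_map.mp hneg
    have hjF : j ∈ F := Finset.mem_filter.mpr ⟨Finset.mem_univ _, by rw [hj]; linarith⟩
    rw [hF, Finset.mem_singleton] at hjF
    subst hjF
    linarith [hj]

end Main
end

section
/- Let T₁ and T₂ be rooted trees. Then the reciprocal polynomials satisfy R_{T₁+T₂}(z) = R_{T₁}(z)·R_{T₂}(z) − z·R_{T₁'}(z)·R_{T₂'}(z). -/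
/-- The integer polynomial `z^n · χ_G(z + 1/z)`, where `χ_G` is the characteristic
polynomial of the adjacency matrix of `G` and `n` is the number of vertices:
written out as `∑ₖ aₖ z^(n-k) (z²+1)^k` where `χ_G = ∑ₖ aₖ zᵏ`. -/
noncomputable def recipQ {V : Type} [Fintype V] (G : SimpleGraph V) : Polynomial ℤ :=
  letI := Classical.decEq V
  letI := Classical.decRel G.Adj
  ∑ k ∈ Finset.range (Fintype.card V + 1),
    Polynomial.C (((SimpleGraph.adjMatrix ℤ G).charpoly).coeff k) *
      Polynomial.X ^ (Fintype.card V - k) * (Polynomial.X ^ 2 + 1) ^ k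
/-- Adjacency relation for the rooted sum `T₁ + T₂`: the disjoint union of `G₁` and
`G₂` with a new edge joining the root `r₁` of `G₁` to the root `r₂` of `G₂`. -/
def joinAdj {n₁ n₂ : ℕ} (G₁ : SimpleGraph (Fin n₁)) (r₁ : Fin n₁)
    (G₂ : SimpleGraph (Fin n₂)) (r₂ : Fin n₂) :
    (Fin n₁ ⊕ Fin n₂) → (Fin n₁ ⊕ Fin n₂) → Prop
  | Sum.inl a, Sum.inl b => G₁.Adj a b
  | Sum.inl a, Sum.inr b => a = r₁ ∧ b = r₂
  | Sum.inr a, Sum.inl b => a = r₂ ∧ b = r₁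
  | Sum.inr a, Sum.inr b => G₂.Adj a b

/-- The rooted sum `T₁ + T₂` of two rooted graphs: join the two roots by a new edge. -/
def joinRooted {n₁ n₂ : ℕ} (G₁ : SimpleGraph (Fin n₁)) (r₁ : Fin n₁)
    (G₂ : SimpleGraph (Fin n₂)) (r₂ : Fin n₂) : SimpleGraph (Fin n₁ ⊕ Fin n₂) where
  Adj := joinAdj G₁ r₁ G₂ r₂
  symm := by
    constructor
    rintro (a | a) (b | b) h <;> simp only [joinAdj] at h ⊢
    · exact G₁.adj_symm h
    · exact ⟨h.2, h.1⟩
    · exact ⟨h.2, h.1⟩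
    · exact G₂.adj_symm h
  loopless := by
    constructor
    rintro (a | a) h <;> simp only [joinAdj] at h
    · exact G₁.irrefl h
    · exact G₂.irrefl h


open Polynomial Matrix SimpleGraph Finset

variable {R : Type*} [CommRing R]

def delEquiv {n : ℕ} (u : Fin n) :
    ((({u}ᶜ : Finset (Fin n)) : Set (Fin n))) ⊕ Unit ≃ Fin n where
  toFun := Sum.elim (fun x => (x : Fin n)) (fun _ => u)
  invFun x := if h : x = u then Sum.inr () else Sum.inl ⟨x, by simp [h]⟩
  left_inv := by
    rintro (⟨x, hx⟩ | ⟨⟩)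
    · have hxu : x ≠ u := by simpa using hx
      simp [hxu]
    · simp
  right_inv x := by
    by_cases h : x = u <;> simp [h]

lemma delEquiv_inl {n : ℕ} (u : Fin n) (s) : delEquiv u (Sum.inl s) = (s : Fin n) := rfl
lemma delEquiv_inr {n : ℕ} (u : Fin n) (s) : delEquiv u (Sum.inr s) = u := rfl

lemma coe_ne {n : ℕ} (u : Fin n) (s : ((({u}ᶜ : Finset (Fin n)) : Set (Fin n)))) : (s : Fin n) ≠ u := by
  have := s.2; simpa using this

lemma det_charmatrix_updateRow_single {n : ℕ} (A : Matrix (Fin n) (Fin n) R) (u : Fin n) :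
    ((charmatrix A).updateRow u (Pi.single u 1)).det
      = (A.submatrix (Subtype.val : ((({u}ᶜ : Finset (Fin n)) : Set (Fin n))) → Fin n) Subtype.val).charpoly := by
  classical
  set M := (charmatrix A).updateRow u (Pi.single u 1) with hM
  have h1 : M.det = (M.submatrix (delEquiv u) (delEquiv u)).det :=
    (Matrix.det_submatrix_equiv_self (delEquiv u) M).symm
  rw [h1]
  have h2 : M.submatrix (delEquiv u) (delEquiv u)
      = Matrix.fromBlocks (charmatrix (A.submatrix Subtype.val Subtype.val))
          (Matrix.of fun s _ => - Polynomial.C (A (s : Fin n) u)) 0 1 := by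
    ext i j : 1
    rcases i with s | s <;> rcases j with t | t
    · simp only [Matrix.submatrix_apply, delEquiv_inl, hM,
        Matrix.updateRow_apply, Matrix.fromBlocks_apply₁₁]
      rw [if_neg (coe_ne u s)]
      simp only [charmatrix_apply, Matrix.diagonal_apply, Matrix.submatrix_apply]
      by_cases h : s = t
      · subst h; simp
      · rw [if_neg h, if_neg (fun hc => h (Subtype.ext hc))]
    · simp only [Matrix.submatrix_apply, delEquiv_inl, delEquiv_inr, hM,
        Matrix.updateRow_apply, Matrix.fromBlocks_apply₁₂, Matrix.of_apply]
      rw [if_neg (coe_ne u s)]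
      rw [charmatrix_apply, Matrix.diagonal_apply, if_neg (coe_ne u s)]
      ring
    · simp only [Matrix.submatrix_apply, delEquiv_inl, delEquiv_inr, hM,
        Matrix.updateRow_apply, Matrix.fromBlocks_apply₂₁]
      simp [Pi.single_apply, coe_ne u t]
    · simp only [Matrix.submatrix_apply, delEquiv_inr, hM,
        Matrix.updateRow_apply, Matrix.fromBlocks_apply₂₂]
      simp [Pi.single_apply, Matrix.one_apply]
  rw [h2, Matrix.det_fromBlocks_zero₂₁]
  simp [Matrix.charpoly]

lemma adjMatrix_induce {V : Type} [Fintype V] (G : SimpleGraph V) (s : Set V) [Fintype s]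
    [DecidableRel G.Adj] [DecidableRel (G.induce s).Adj] :
    adjMatrix R (G.induce s) = (adjMatrix R G).submatrix Subtype.val Subtype.val := by
  ext a b
  simp [adjMatrix_apply, comap_adj]

lemma card_del {n : ℕ} (u : Fin n) :
    Fintype.card ((({u}ᶜ : Finset (Fin n)) : Set (Fin n))) = n - 1 := by
  have e : ((({u}ᶜ : Finset (Fin n)) : Set (Fin n))) ≃ {x : Fin n // x ∈ ({u}ᶜ : Finset (Fin n))} :=
    Equiv.subtypeEquivRight (fun x => by simp)
  rw [Fintype.card_congr e, Fintype.card_coe, Finset.card_compl]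
  simp

lemma det_updateRow_sub' {m : Type*} [DecidableEq m] [Fintype m]
    (M : Matrix m m R) (j : m) (a b : m → R) :
    (M.updateRow j (a - b)).det = (M.updateRow j a).det - (M.updateRow j b).det := by
  rw [sub_eq_add_neg, Matrix.det_updateRow_add, ← neg_one_smul R b,
    Matrix.det_updateRow_smul]
  ring

lemma updateRow_comm' {m : Type*} [DecidableEq m] {α : Type*} (M : Matrix m m α)
    {i j : m} (h : i ≠ j) (a b : m → α) :
    (M.updateRow i a).updateRow j b = (M.updateRow j b).updateRow i a := by
  ext k l
  by_cases hk : k = j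
  · subst hk
    rw [Matrix.updateRow_self, Matrix.updateRow_ne h.symm, Matrix.updateRow_self]
  · rw [Matrix.updateRow_ne hk]
    by_cases hk' : k = i
    · subst hk'
      rw [Matrix.updateRow_self, Matrix.updateRow_self]
    · rw [Matrix.updateRow_ne hk', Matrix.updateRow_ne hk', Matrix.updateRow_ne hk]

lemma join_adj_ll {n₁ n₂ : ℕ} (G₁ : SimpleGraph (Fin n₁)) (r₁ : Fin n₁)
    (G₂ : SimpleGraph (Fin n₂)) (r₂ : Fin n₂) (a b : Fin n₁) :
    (joinRooted G₁ r₁ G₂ r₂).Adj (Sum.inl a) (Sum.inl b) ↔ G₁.Adj a b := Iff.rfl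
lemma join_adj_lr {n₁ n₂ : ℕ} (G₁ : SimpleGraph (Fin n₁)) (r₁ : Fin n₁)
    (G₂ : SimpleGraph (Fin n₂)) (r₂ : Fin n₂) (a : Fin n₁) (b : Fin n₂) :
    (joinRooted G₁ r₁ G₂ r₂).Adj (Sum.inl a) (Sum.inr b) ↔ a = r₁ ∧ b = r₂ := Iff.rfl
lemma join_adj_rl {n₁ n₂ : ℕ} (G₁ : SimpleGraph (Fin n₁)) (r₁ : Fin n₁)
    (G₂ : SimpleGraph (Fin n₂)) (r₂ : Fin n₂) (a : Fin n₂) (b : Fin n₁) :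
    (joinRooted G₁ r₁ G₂ r₂).Adj (Sum.inr a) (Sum.inl b) ↔ a = r₂ ∧ b = r₁ := Iff.rfl
lemma join_adj_rr {n₁ n₂ : ℕ} (G₁ : SimpleGraph (Fin n₁)) (r₁ : Fin n₁)
    (G₂ : SimpleGraph (Fin n₂)) (r₂ : Fin n₂) (a b : Fin n₂) :
    (joinRooted G₁ r₁ G₂ r₂).Adj (Sum.inr a) (Sum.inr b) ↔ G₂.Adj a b := Iff.rfl

lemma charpoly_joinRooted {n₁ n₂ : ℕ} (G₁ : SimpleGraph (Fin n₁)) (r₁ : Fin n₁)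
    (G₂ : SimpleGraph (Fin n₂)) (r₂ : Fin n₂)
    [DecidableRel G₁.Adj] [DecidableRel G₂.Adj]
    [DecidableRel (joinRooted G₁ r₁ G₂ r₂).Adj]
    [DecidableRel (G₁.induce ((({r₁}ᶜ : Finset (Fin n₁)) : Set (Fin n₁)))).Adj]
    [DecidableRel (G₂.induce ((({r₂}ᶜ : Finset (Fin n₂)) : Set (Fin n₂)))).Adj] :
    (adjMatrix ℤ (joinRooted G₁ r₁ G₂ r₂)).charpoly
      = (adjMatrix ℤ G₁).charpoly * (adjMatrix ℤ G₂).charpoly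
        - (adjMatrix ℤ (G₁.induce ((({r₁}ᶜ : Finset (Fin n₁)) : Set (Fin n₁))))).charpoly *
          (adjMatrix ℤ (G₂.induce ((({r₂}ᶜ : Finset (Fin n₂)) : Set (Fin n₂))))).charpoly := by
  classical
  set A₁ := adjMatrix ℤ G₁ with hA₁
  set A₂ := adjMatrix ℤ G₂ with hA₂
  set u : Fin n₁ ⊕ Fin n₂ := Sum.inl r₁ with hu
  set v : Fin n₁ ⊕ Fin n₂ := Sum.inr r₂ with hv
  have huv : u ≠ v := by simp [hu, hv]
  set M₀ : Matrix (Fin n₁ ⊕ Fin n₂) (Fin n₁ ⊕ Fin n₂) (Polynomial ℤ) :=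
    charmatrix (Matrix.fromBlocks A₁ 0 0 A₂) with hM₀
  -- Step 1 : the charmatrix of the join
  have hM : charmatrix (adjMatrix ℤ (joinRooted G₁ r₁ G₂ r₂))
      = (M₀.updateRow u (M₀ u - Pi.single v 1)).updateRow v (M₀ v - Pi.single u 1) := by
    ext i j
    by_cases hiv : i = v
    · subst hiv
      rw [Matrix.updateRow_self]
      rcases j with b | b
      · simp only [Pi.sub_apply, hM₀, charmatrix_apply, hv, Matrix.diagonal_apply,
          Matrix.fromBlocks_apply₂₁, adjMatrix_apply, join_adj_rl, Pi.single_apply]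
        by_cases hb : b = r₁ <;> simp [hb, hu, hv]
      · simp only [Pi.sub_apply, hM₀, charmatrix_apply, hv, Matrix.diagonal_apply,
          Matrix.fromBlocks_apply₂₂, adjMatrix_apply, join_adj_rr, Pi.single_apply]
        simp [hu, hA₂, adjMatrix_apply]
    · rw [Matrix.updateRow_ne hiv]
      by_cases hiu : i = u
      · subst hiu
        rw [Matrix.updateRow_self]
        rcases j with b | b
        · simp only [Pi.sub_apply, hM₀, charmatrix_apply, hu, Matrix.diagonal_apply,
            Matrix.fromBlocks_apply₁₁, adjMatrix_apply, join_adj_ll, Pi.single_apply]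
          simp [hv, hA₁, adjMatrix_apply]
        · simp only [Pi.sub_apply, hM₀, charmatrix_apply, hu, Matrix.diagonal_apply,
            Matrix.fromBlocks_apply₁₂, adjMatrix_apply, join_adj_lr, Pi.single_apply]
          by_cases hb : b = r₂ <;> simp [hb, hv]
      · rw [Matrix.updateRow_ne hiu]
        rcases i with a | a <;> rcases j with b | b
        · simp [hM₀, charmatrix_apply, hA₁, adjMatrix_apply, join_adj_ll]
        · have ha : a ≠ r₁ := fun h => hiu (by simp [hu, h])
          simp [hM₀, charmatrix_apply, adjMatrix_apply, join_adj_lr, ha]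
        · have ha : a ≠ r₂ := fun h => hiv (by simp [hv, h])
          simp [hM₀, charmatrix_apply, adjMatrix_apply, join_adj_rl, ha]
        · simp [hM₀, charmatrix_apply, hA₂, adjMatrix_apply, join_adj_rr]
  -- row facts
  have hrow_u : (M₀.updateRow v (Pi.single u 1)) u = M₀ u := Matrix.updateRow_ne huv
  have hrow_v : (M₀.updateRow u (M₀ u - Pi.single v 1)) v = M₀ v := Matrix.updateRow_ne huv.symm
  have hM₀blocks : M₀ = Matrix.fromBlocks (charmatrix A₁) 0 0 (charmatrix A₂) := by
    ext i j
    rcases i with a | a <;> rcases j with b | b <;>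
      simp [hM₀, charmatrix_apply, Matrix.diagonal_apply, Matrix.fromBlocks_apply₁₁,
        Matrix.fromBlocks_apply₁₂, Matrix.fromBlocks_apply₂₁, Matrix.fromBlocks_apply₂₂]
  have hz1 : (M₀.updateRow u (Pi.single v 1)).det = 0 := by
    set N := M₀.updateRow u (Pi.single v 1) with hN
    have hb : N.toBlocks₂₁ = 0 := by
      ext a b
      simp [hN, Matrix.toBlocks₂₁,
        Matrix.updateRow_ne (show (Sum.inr a : Fin n₁ ⊕ Fin n₂) ≠ u by simp [hu]), hM₀blocks]
    have hdet : N.det = (N.toBlocks₁₁).det * (N.toBlocks₂₂).det := by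
      conv_lhs => rw [← Matrix.fromBlocks_toBlocks N]
      rw [hb, Matrix.det_fromBlocks_zero₂₁]
    rw [hdet]
    have hrow : (N.toBlocks₁₁).det = 0 := by
      apply Matrix.det_eq_zero_of_row_eq_zero r₁
      intro j
      show N (Sum.inl r₁) (Sum.inl j) = 0
      rw [← hu, hN, Matrix.updateRow_self, Pi.single_apply, if_neg (by simp [hv])]
    rw [hrow, zero_mul]
  have hz2 : (M₀.updateRow v (Pi.single u 1)).det = 0 := by
    set N := M₀.updateRow v (Pi.single u 1) with hN
    have hb : N.toBlocks₁₂ = 0 := by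
      ext a b
      simp [hN, Matrix.toBlocks₁₂,
        Matrix.updateRow_ne (show (Sum.inl a : Fin n₁ ⊕ Fin n₂) ≠ v by simp [hv]), hM₀blocks]
    have hdet : N.det = (N.toBlocks₁₁).det * (N.toBlocks₂₂).det := by
      conv_lhs => rw [← Matrix.fromBlocks_toBlocks N]
      rw [hb, Matrix.det_fromBlocks_zero₁₂]
    rw [hdet]
    have hrow : (N.toBlocks₂₂).det = 0 := by
      apply Matrix.det_eq_zero_of_row_eq_zero r₂
      intro j
      show N (Sum.inr r₂) (Sum.inr j) = 0
      rw [← hv, hN, Matrix.updateRow_self, Pi.single_apply, if_neg (by simp [hu])]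
    rw [hrow, mul_zero]
  have hQ : ((M₀.updateRow v (Pi.single u 1)).updateRow u (Pi.single v 1)).det
      = - (((charmatrix A₁).updateRow r₁ (Pi.single r₁ 1)).det *
            ((charmatrix A₂).updateRow r₂ (Pi.single r₂ 1)).det) := by
    set Q := (M₀.updateRow v (Pi.single u 1)).updateRow u (Pi.single v 1) with hQdef
    have hQu : Q u = Pi.single v 1 := by rw [hQdef, Matrix.updateRow_self]
    have hQv : Q v = Pi.single u 1 := by
      rw [hQdef, Matrix.updateRow_ne huv.symm, Matrix.updateRow_self]
    have hQo : ∀ i, i ≠ u → i ≠ v → Q i = M₀ i := by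
      intro i hiu hiv
      rw [hQdef, Matrix.updateRow_ne hiu, Matrix.updateRow_ne hiv]
    have hperm := Matrix.det_permute (Equiv.swap u v) Q
    rw [Equiv.Perm.sign_swap huv] at hperm
    have hQ' : Q.submatrix (Equiv.swap u v) id
        = Matrix.fromBlocks ((charmatrix A₁).updateRow r₁ (Pi.single r₁ 1)) 0 0
            ((charmatrix A₂).updateRow r₂ (Pi.single r₂ 1)) := by
      ext i j : 1
      rcases i with a | a
      · by_cases ha : a = r₁
        · subst ha
          have hswap : Equiv.swap u v (Sum.inl a) = v := by
            rw [← hu, Equiv.swap_apply_left]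
          rcases j with b | b
          · rw [Matrix.submatrix_apply, hswap, hQv]
            simp only [Matrix.submatrix_apply, hswap, hQv, id_eq, Matrix.fromBlocks_apply₁₁,
              Matrix.updateRow_self, Pi.single_apply, hu, Sum.inl.injEq]
          · rw [Matrix.submatrix_apply, hswap, hQv]
            simp only [Matrix.submatrix_apply, hswap, hQv, id_eq, Matrix.fromBlocks_apply₁₂,
              Pi.single_apply, hu]
            simp
        · have hne1 : (Sum.inl a : Fin n₁ ⊕ Fin n₂) ≠ u := by simp [hu, ha]
          have hne2 : (Sum.inl a : Fin n₁ ⊕ Fin n₂) ≠ v := by simp [hv]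
          have hswap : Equiv.swap u v (Sum.inl a) = Sum.inl a :=
            Equiv.swap_apply_of_ne_of_ne hne1 hne2
          rcases j with b | b
          · simp only [Matrix.submatrix_apply, hswap, hQo _ hne1 hne2, id_eq,
              Matrix.fromBlocks_apply₁₁, hM₀blocks]
            rw [Matrix.updateRow_ne ha]
          · simp only [Matrix.submatrix_apply, hswap, hQo _ hne1 hne2, id_eq,
              Matrix.fromBlocks_apply₁₂, hM₀blocks]
      · by_cases ha : a = r₂
        · subst ha
          have hswap : Equiv.swap u v (Sum.inr a) = u := by
            rw [← hv, Equiv.swap_apply_right]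
          rcases j with b | b
          · rw [Matrix.submatrix_apply, hswap, hQu]
            simp only [Matrix.submatrix_apply, hswap, hQu, id_eq, Matrix.fromBlocks_apply₂₁,
              Pi.single_apply, hv]
            simp
          · rw [Matrix.submatrix_apply, hswap, hQu]
            simp only [Matrix.submatrix_apply, hswap, hQu, id_eq, Matrix.fromBlocks_apply₂₂,
              Matrix.updateRow_self, Pi.single_apply, hv, Sum.inr.injEq]
        · have hne1 : (Sum.inr a : Fin n₁ ⊕ Fin n₂) ≠ u := by simp [hu]
          have hne2 : (Sum.inr a : Fin n₁ ⊕ Fin n₂) ≠ v := by simp [hv, ha]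
          have hswap : Equiv.swap u v (Sum.inr a) = Sum.inr a :=
            Equiv.swap_apply_of_ne_of_ne hne1 hne2
          rcases j with b | b
          · simp only [Matrix.submatrix_apply, hswap, hQo _ hne1 hne2, id_eq,
              Matrix.fromBlocks_apply₂₁, hM₀blocks]
          · simp only [Matrix.submatrix_apply, hswap, hQo _ hne1 hne2, id_eq,
              Matrix.fromBlocks_apply₂₂, hM₀blocks]
            rw [Matrix.updateRow_ne ha]
    rw [hQ', Matrix.det_fromBlocks_zero₂₁] at hperm
    simp only [Units.val_neg, Units.val_one, Int.cast_neg, Int.cast_one, neg_mul, one_mul] at hperm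
    linear_combination hperm
  -- assemble
  have hd0 : M₀.det = (charmatrix A₁).det * (charmatrix A₂).det := by
    rw [hM₀blocks, Matrix.det_fromBlocks_zero₂₁]
  have hchar : (adjMatrix ℤ (joinRooted G₁ r₁ G₂ r₂)).charpoly
      = (charmatrix (adjMatrix ℤ (joinRooted G₁ r₁ G₂ r₂))).det := rfl
  rw [hchar, hM, det_updateRow_sub',
    show ((M₀.updateRow u (M₀ u - Pi.single v 1)).updateRow v (M₀ v))
        = M₀.updateRow u (M₀ u - Pi.single v 1) by rw [← hrow_v, Matrix.updateRow_eq_self],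
    det_updateRow_sub', Matrix.updateRow_eq_self,
    updateRow_comm' _ huv, det_updateRow_sub',
    show ((M₀.updateRow v (Pi.single u 1)).updateRow u (M₀ u))
        = M₀.updateRow v (Pi.single u 1) by rw [← hrow_u, Matrix.updateRow_eq_self],
    hz1, hz2, hQ, hd0]
  have hc1 : ((charmatrix A₁).updateRow r₁ (Pi.single r₁ 1)).det
      = (adjMatrix ℤ (G₁.induce ((({r₁}ᶜ : Finset (Fin n₁)) : Set (Fin n₁))))).charpoly := by
    rw [det_charmatrix_updateRow_single A₁ r₁, adjMatrix_induce (R := ℤ) G₁]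
  have hc2 : ((charmatrix A₂).updateRow r₂ (Pi.single r₂ 1)).det
      = (adjMatrix ℤ (G₂.induce ((({r₂}ᶜ : Finset (Fin n₂)) : Set (Fin n₂))))).charpoly := by
    rw [det_charmatrix_updateRow_single A₂ r₂, adjMatrix_induce (R := ℤ) G₂]
  rw [hc1, hc2]
  unfold Matrix.charpoly
  ring

lemma recipQ_def {V : Type} [Fintype V] [DecidableEq V] (G : SimpleGraph V)
    [DecidableRel G.Adj] :
    recipQ G = ∑ k ∈ Finset.range (Fintype.card V + 1),
      Polynomial.C (((SimpleGraph.adjMatrix ℤ G).charpoly).coeff k) *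
        Polynomial.X ^ (Fintype.card V - k) * (Polynomial.X ^ 2 + 1) ^ k := by
  unfold recipQ
  congr!

lemma eval_recipQ {V : Type} [Fintype V] [DecidableEq V] (G : SimpleGraph V)
    [DecidableRel G.Adj] {t : ℚ} (ht : t ≠ 0) :
    Polynomial.eval t ((recipQ G).map (Int.castRingHom ℚ)) =
      t ^ Fintype.card V *
        Polynomial.eval (t + t⁻¹) (((SimpleGraph.adjMatrix ℤ G).charpoly).map (Int.castRingHom ℚ)) := by
  classical
  set p := (SimpleGraph.adjMatrix ℤ G).charpoly with hp
  set N := Fintype.card V with hN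
  have hdeg : (p.map (Int.castRingHom ℚ)).natDegree < N + 1 := by
    have h1 : (p.map (Int.castRingHom ℚ)).natDegree ≤ p.natDegree := natDegree_map_le
    have h2 : p.natDegree = N := Matrix.charpoly_natDegree_eq_dim _
    omega
  rw [eval_eq_sum_range' hdeg, recipQ_def, Polynomial.map_sum, eval_finset_sum, Finset.mul_sum]
  apply Finset.sum_congr rfl
  intro k hk
  have hkN : k ≤ N := by
    simp only [Finset.mem_range] at hk; omega
  rw [Polynomial.map_mul, Polynomial.map_mul, Polynomial.map_pow, Polynomial.map_pow,
    Polynomial.map_add, Polynomial.map_pow, Polynomial.map_one, map_C, map_X]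
  simp only [eval_mul, eval_pow, eval_C, eval_X, eval_add, eval_one, coeff_map]
  rw [show ((Int.castRingHom ℚ) (p.coeff k) : ℚ) = ((p.coeff k : ℚ)) from rfl]
  have key : t ^ (N - k) * (t ^ 2 + 1) ^ k = t ^ N * (t + t⁻¹) ^ k := by
    have h1 : t * (t + t⁻¹) = t ^ 2 + 1 := by
      field_simp
    have h2 : t ^ N = t ^ (N - k) * t ^ k := by
      rw [← pow_add]; congr 1; omega
    calc t ^ (N - k) * (t ^ 2 + 1) ^ k = t ^ (N - k) * (t * (t + t⁻¹)) ^ k := by rw [h1]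
    _ = t ^ (N - k) * (t ^ k * (t + t⁻¹) ^ k) := by rw [mul_pow]
    _ = t ^ N * (t + t⁻¹) ^ k := by rw [h2]; ring
  rw [mul_assoc, key]; ring


lemma recipQ_join {n₁ n₂ : ℕ} (G₁ : SimpleGraph (Fin n₁)) (r₁ : Fin n₁)
    (G₂ : SimpleGraph (Fin n₂)) (r₂ : Fin n₂) (hn₁ : n₁ ≠ 0) (hn₂ : n₂ ≠ 0) :
    recipQ (joinRooted G₁ r₁ G₂ r₂)
      = recipQ G₁ * recipQ G₂
        - Polynomial.X ^ 2 * recipQ (G₁.induce ((({r₁}ᶜ : Finset (Fin n₁)) : Set (Fin n₁))))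
          * recipQ (G₂.induce ((({r₂}ᶜ : Finset (Fin n₂)) : Set (Fin n₂)))) := by
  classical
  apply Polynomial.map_injective (Int.castRingHom ℚ) Int.cast_injective
  apply Polynomial.eq_of_infinite_eval_eq
  have hinf : ({t : ℚ | t ≠ 0}).Infinite := by
    apply Set.infinite_of_injective_forall_mem (f := fun n : ℕ => ((n : ℚ) + 1))
    · intro a b h
      simp only [add_left_inj, Nat.cast_inj] at h
      exact h
    · intro n
      simp only [Set.mem_setOf_eq]
      positivity
  refine Set.Infinite.mono ?_ hinf
  intro t ht
  simp only [Set.mem_setOf_eq] at ht ⊢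
  have hcard : Fintype.card (Fin n₁ ⊕ Fin n₂) = n₁ + n₂ := by simp
  rw [Polynomial.map_sub, Polynomial.map_mul, Polynomial.map_mul, Polynomial.map_mul,
    Polynomial.map_pow, Polynomial.map_X, eval_sub, eval_mul, eval_mul, eval_mul,
    eval_pow, eval_X]
  rw [eval_recipQ _ ht, eval_recipQ _ ht, eval_recipQ _ ht, eval_recipQ _ ht, eval_recipQ _ ht]
  rw [charpoly_joinRooted G₁ r₁ G₂ r₂, Polynomial.map_sub, Polynomial.map_mul,
    Polynomial.map_mul, eval_sub, eval_mul, eval_mul]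
  rw [hcard, Fintype.card_fin, Fintype.card_fin, card_del r₁, card_del r₂]
  have h1 : t ^ n₁ = t ^ (n₁ - 1) * t := by rw [← pow_succ]; congr 1; omega
  have h2 : t ^ n₂ = t ^ (n₂ - 1) * t := by rw [← pow_succ]; congr 1; omega
  rw [pow_add, h1, h2]
  ring

lemma comp_X_sq_inj (P Q : Polynomial ℤ)
    (h : P.comp (Polynomial.X ^ 2) = Q.comp (Polynomial.X ^ 2)) : P = Q := by
  apply Polynomial.eq_of_infinite_eval_eq
  apply Set.infinite_of_injective_forall_mem (f := fun n : ℕ => ((n : ℤ) ^ 2))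
  · intro a b hab
    simp only at hab
    have : (a : ℤ) = b := by nlinarith [sq_nonneg ((a:ℤ) - b), sq_nonneg ((a:ℤ) + b)]
    exact_mod_cast this
  · intro n
    simp only [Set.mem_setOf_eq]
    have := congrArg (Polynomial.eval ((n : ℤ))) h
    simpa [Polynomial.eval_comp] using this

/-- For rooted trees `T₁`, `T₂`, the reciprocal polynomials satisfy
`R_{T₁+T₂} = R_{T₁}·R_{T₂} − z·R_{T₁'}·R_{T₂'}`, where `Tᵢ'` is the forest obtained by
deleting the root of `Tᵢ`.  The reciprocal polynomial `R` of a (bipartite) graph on `N`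
vertices is characterised by `R(z²) = z^N χ(z+1/z)`. -/
theorem recip_of_rooted_sum {n₁ n₂ : ℕ} (G₁ : SimpleGraph (Fin n₁))
    (G₂ : SimpleGraph (Fin n₂)) (h₁ : G₁.IsTree) (h₂ : G₂.IsTree)
    (r₁ : Fin n₁) (r₂ : Fin n₂)
    (R₁ R₂ R₁' R₂' R₁₂ : Polynomial ℤ)
    (hR₁ : R₁.comp (Polynomial.X ^ 2) = recipQ G₁)
    (hR₂ : R₂.comp (Polynomial.X ^ 2) = recipQ G₂)
    (hR₁' : R₁'.comp (Polynomial.X ^ 2) =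
      recipQ (G₁.induce ((({r₁}ᶜ : Finset (Fin n₁)) : Set (Fin n₁)))))
    (hR₂' : R₂'.comp (Polynomial.X ^ 2) =
      recipQ (G₂.induce ((({r₂}ᶜ : Finset (Fin n₂)) : Set (Fin n₂)))))
    (hR₁₂ : R₁₂.comp (Polynomial.X ^ 2) = recipQ (joinRooted G₁ r₁ G₂ r₂)) :
    R₁₂ = R₁ * R₂ - Polynomial.X * R₁' * R₂' := by
  have hn₁ : n₁ ≠ 0 := by
    rintro rfl
    exact h₁.isConnected.nonempty.elim (fun x => x.elim0)
  have hn₂ : n₂ ≠ 0 := by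
    rintro rfl
    exact h₂.isConnected.nonempty.elim (fun x => x.elim0)
  apply comp_X_sq_inj
  rw [hR₁₂, recipQ_join G₁ r₁ G₂ r₂ hn₁ hn₂, Polynomial.sub_comp, Polynomial.mul_comp,
    Polynomial.mul_comp, Polynomial.mul_comp, Polynomial.X_comp, hR₁, hR₂, hR₁', hR₂']
end

section
/- Let T be a Salem tree, i.e. a finite tree having exactly one eigenvalue greater than 2. Then either there exists a vertex v of T such that the forest T − v is cyclotomic, or there exists an edge {u, v} of T such that the forest obtained by deleting both u and v from T is cyclotomic. -/
open Polynomial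

namespace SalemAux

open Matrix Finset SimpleGraph

section Spectral

variable {m : Type} [Fintype m] [DecidableEq m]

lemma eval_charpoly' (A : Matrix m m ℝ) (t : ℝ) :
    A.charpoly.eval t = (t • (1 : Matrix m m ℝ) - A).det := by
  rw [Matrix.charpoly, show Polynomial.eval t = Polynomial.evalRingHom t from rfl,
    RingHom.map_det]
  congr 1
  ext i j
  by_cases h : i = j <;>
    simp [h, Matrix.charmatrix_apply, Matrix.one_apply, Matrix.diagonal_apply]

lemma charpoly_eq_prod (A : Matrix m m ℝ) (hA : A.IsHermitian) :
    A.charpoly = ((Finset.univ.val.map hA.eigenvalues).map (fun a => X - C a)).prod := by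
  apply Polynomial.funext
  intro t
  rw [eval_charpoly']
  have hU : (hA.eigenvectorUnitary : Matrix m m ℝ) * star (hA.eigenvectorUnitary : Matrix m m ℝ) = 1 :=
    (Matrix.mem_unitaryGroup_iff).mp (hA.eigenvectorUnitary).2
  have hdiag : (RCLike.ofReal ∘ hA.eigenvalues : m → ℝ) = hA.eigenvalues := by
    rw [RCLike.ofReal_real_eq_id]; rfl
  have key : t • (1 : Matrix m m ℝ) - A
      = (hA.eigenvectorUnitary : Matrix m m ℝ) * (t • (1 : Matrix m m ℝ) - Matrix.diagonal hA.eigenvalues) * star (hA.eigenvectorUnitary : Matrix m m ℝ) := by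
    conv_lhs => rw [hA.spectral_theorem]
    rw [Unitary.conjStarAlgAut_apply, Matrix.mul_sub, Matrix.sub_mul, hdiag, Matrix.mul_smul, Matrix.smul_mul, mul_one, hU]
  rw [key, Matrix.det_mul, Matrix.det_mul]
  have hdet1 : (hA.eigenvectorUnitary : Matrix m m ℝ).det * (star (hA.eigenvectorUnitary : Matrix m m ℝ)).det = 1 := by
    rw [← Matrix.det_mul, hU, Matrix.det_one]
  have hmid : (t • (1 : Matrix m m ℝ) - Matrix.diagonal hA.eigenvalues).det
      = ∏ i, (t - hA.eigenvalues i) := by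
    rw [Matrix.smul_one_eq_diagonal, Matrix.diagonal_sub, Matrix.det_diagonal]
  rw [hmid]
  have hrhs : (((Finset.univ.val.map hA.eigenvalues).map (fun a => X - C a)).prod).eval t
      = ∏ i, (t - hA.eigenvalues i) := by
    rw [Polynomial.eval_multiset_prod]
    rw [Multiset.map_map]
    simp only [Function.comp, eval_sub, eval_X, eval_C]
    rw [Finset.prod_eq_multiset_prod, Multiset.map_map]
    rfl
  rw [hrhs]
  linear_combination (∏ x, (t - hA.eigenvalues x)) * hdet1

lemma roots_charpoly (A : Matrix m m ℝ) (hA : A.IsHermitian) :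
    A.charpoly.roots = Finset.univ.val.map hA.eigenvalues := by
  rw [charpoly_eq_prod A hA, Polynomial.roots_multiset_prod_X_sub_C]

lemma exists_eigvec {A : Matrix m m ℝ} {μ : ℝ} (h : μ ∈ A.charpoly.roots) :
    ∃ v : m → ℝ, v ≠ 0 ∧ A *ᵥ v = μ • v := by
  have hroot : A.charpoly.IsRoot μ :=
    (Polynomial.mem_roots (A.charpoly_monic.ne_zero)).1 h
  have hdet : (μ • (1 : Matrix m m ℝ) - A).det = 0 := by
    rw [← eval_charpoly']; exact hroot
  obtain ⟨v, hv0, hv⟩ := (Matrix.exists_mulVec_eq_zero_iff).2 hdet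
  refine ⟨v, hv0, ?_⟩
  rw [Matrix.sub_mulVec, Matrix.smul_mulVec, Matrix.one_mulVec, sub_eq_zero] at hv
  exact hv.symm


lemma no_two_positive {A : Matrix m m ℝ} (hA : A.IsHermitian)
    (hcount : Multiset.card (((Finset.univ.val.map hA.eigenvalues)).filter (fun μ => 2 < μ)) ≤ 1)
    {y z : m → ℝ}
    (hyQ : 2 * (y ⬝ᵥ y) < y ⬝ᵥ (A *ᵥ y)) (hzQ : 2 * (z ⬝ᵥ z) < z ⬝ᵥ (A *ᵥ z))
    (hdot : y ⬝ᵥ z = 0) (hAdot : y ⬝ᵥ (A *ᵥ z) = 0) : False := by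
  classical
  set lam := hA.eigenvalues with hlam
  have hcount' : (Finset.univ.filter (fun i => 2 < lam i)).card ≤ 1 := by
    have he : (Finset.univ.filter (fun i => 2 < lam i)).card
        = Multiset.card ((univ.val.map lam).filter (fun μ => 2 < μ)) := by
      rw [Multiset.filter_map, Multiset.card_map]
      rfl
    rw [he]; exact hcount
  have hU1 : (hA.eigenvectorUnitary : Matrix m m ℝ) * star (hA.eigenvectorUnitary : Matrix m m ℝ) = 1 :=
    (Matrix.mem_unitaryGroup_iff).mp (hA.eigenvectorUnitary).2
  have hstar : star (hA.eigenvectorUnitary : Matrix m m ℝ)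
      = (hA.eigenvectorUnitary : Matrix m m ℝ)ᵀ := by
    ext i j
    simp [Matrix.star_apply]
  set U : Matrix m m ℝ := (hA.eigenvectorUnitary : Matrix m m ℝ) with hUdef
  set c : (m → ℝ) → m → ℝ := fun x => x ᵥ* U with hc
  have hcw : ∀ w : m → ℝ, (star U) *ᵥ w = c w := by
    intro w
    rw [hstar, Matrix.mulVec_transpose]
  have key2 : ∀ x w : m → ℝ, x ⬝ᵥ w = ∑ i, c x i * c w i := by
    intro x w
    have : c x ⬝ᵥ c w = x ⬝ᵥ w := by
      rw [← hcw w, Matrix.dotProduct_mulVec, Matrix.vecMul_vecMul, hU1, Matrix.vecMul_one]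
    rw [← this]
    rfl
  have hdiag : (RCLike.ofReal ∘ lam : m → ℝ) = lam := by
    rw [RCLike.ofReal_real_eq_id]; rfl
  have key1 : ∀ x w : m → ℝ, x ⬝ᵥ (A *ᵥ w) = ∑ i, lam i * (c x i * c w i) := by
    intro x w
    conv_lhs => rw [hA.spectral_theorem]
    rw [Unitary.conjStarAlgAut_apply, ← hUdef, hdiag, ← Matrix.mulVec_mulVec, ← Matrix.mulVec_mulVec,
      Matrix.dotProduct_mulVec x U, hcw w]
    calc c x ⬝ᵥ (Matrix.diagonal lam *ᵥ c w)
        = ∑ i, c x i * ((Matrix.diagonal lam *ᵥ c w) i) := rfl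
      _ = ∑ i, lam i * (c x i * c w i) := by
          apply Finset.sum_congr rfl; intro i _
          rw [Matrix.mulVec_diagonal]; ring
  -- positivity of the quadratic excess in coordinates
  have hQy : 0 < ∑ i, (lam i - 2) * (c y i * c y i) := by
    have e1 := key1 y y
    have e2 := key2 y y
    have e : ∑ i, (lam i - 2) * (c y i * c y i)
        = (∑ i, lam i * (c y i * c y i)) - 2 * ∑ i, c y i * c y i := by
      rw [Finset.mul_sum, ← Finset.sum_sub_distrib]
      apply Finset.sum_congr rfl; intro i _; ring
    rw [e, ← e1, ← e2]; linarith
  have hQz : 0 < ∑ i, (lam i - 2) * (c z i * c z i) := by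
    have e1 := key1 z z
    have e2 := key2 z z
    have e : ∑ i, (lam i - 2) * (c z i * c z i)
        = (∑ i, lam i * (c z i * c z i)) - 2 * ∑ i, c z i * c z i := by
      rw [Finset.mul_sum, ← Finset.sum_sub_distrib]
      apply Finset.sum_congr rfl; intro i _; ring
    rw [e, ← e1, ← e2]; linarith
  have hX : ∑ i, (lam i - 2) * (c y i * c z i) = 0 := by
    have e1 := key1 y z
    have e2 := key2 y z
    have e : ∑ i, (lam i - 2) * (c y i * c z i)
        = (∑ i, lam i * (c y i * c z i)) - 2 * ∑ i, c y i * c z i := by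
      rw [Finset.mul_sum, ← Finset.sum_sub_distrib]
      apply Finset.sum_congr rfl; intro i _; ring
    rw [e, ← e1, ← e2, hAdot, hdot]; ring
  -- find the positive indices
  obtain ⟨i₀, -, hi₀⟩ : ∃ i ∈ Finset.univ, 0 < (lam i - 2) * (c y i * c y i) := by
    by_contra hcon
    push_neg at hcon
    have : ∑ i, (lam i - 2) * (c y i * c y i) ≤ 0 :=
      Finset.sum_nonpos fun i hi => hcon i hi
    linarith
  obtain ⟨i₁, -, hi₁⟩ : ∃ i ∈ Finset.univ, 0 < (lam i - 2) * (c z i * c z i) := by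
    by_contra hcon
    push_neg at hcon
    have : ∑ i, (lam i - 2) * (c z i * c z i) ≤ 0 :=
      Finset.sum_nonpos fun i hi => hcon i hi
    linarith
  have hlam0 : 2 < lam i₀ := by nlinarith [mul_self_nonneg (c y i₀), mul_self_nonneg (c z i₀)]
  have hlam1 : 2 < lam i₁ := by nlinarith [mul_self_nonneg (c y i₁), mul_self_nonneg (c z i₁)]
  have hieq : i₀ = i₁ := by
    apply Finset.card_le_one.mp hcount' i₀ ?_ i₁ ?_ <;>
      simp [Finset.mem_filter, hlam0, hlam1]
  subst hieq
  have hcy : c y i₀ ≠ 0 := by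
    intro h; rw [h] at hi₀; simp at hi₀
  have hcz : c z i₀ ≠ 0 := by
    intro h; rw [h] at hi₁; simp at hi₁
  set a := c z i₀ with ha
  set b := c y i₀ with hb
  -- the combined vector coefficients
  have hT : (∑ i, (lam i - 2) * ((a * c y i - b * c z i) * (a * c y i - b * c z i)))
      = a * a * (∑ i, (lam i - 2) * (c y i * c y i))
        + b * b * (∑ i, (lam i - 2) * (c z i * c z i))
        - 2 * a * b * (∑ i, (lam i - 2) * (c y i * c z i)) := by
    rw [Finset.mul_sum, Finset.mul_sum, Finset.mul_sum, ← Finset.sum_add_distrib,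
      ← Finset.sum_sub_distrib]
    apply Finset.sum_congr rfl; intro i _; ring
  have hTpos : 0 < ∑ i, (lam i - 2) * ((a * c y i - b * c z i) * (a * c y i - b * c z i)) := by
    rw [hT, hX]
    have haa : 0 < a * a := mul_self_pos.mpr hcz
    have hbb : 0 < b * b := mul_self_pos.mpr hcy
    nlinarith
  have hTnonpos : (∑ i, (lam i - 2) * ((a * c y i - b * c z i) * (a * c y i - b * c z i))) ≤ 0 := by
    apply Finset.sum_nonpos
    intro i _
    by_cases hii : i = i₀
    · subst hii
      have : a * c y i - b * c z i = 0 := by rw [ha, hb]; ring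
      rw [this]; simp
    · have hle : lam i ≤ 2 := by
        by_contra hgt
        push_neg at hgt
        exact hii (Finset.card_le_one.mp hcount' i (by simp [hgt]) i₀ (by simp [hlam0]))
      nlinarith [mul_self_nonneg (a * c y i - b * c z i)]
  linarith


end Spectral

section Graphs

lemma adjEigs_eq {V : Type} [Fintype V] (G : SimpleGraph V) [DecidableEq V] [DecidableRel G.Adj] :
    adjEigs G = (SimpleGraph.adjMatrix ℝ G).charpoly.roots := by
  unfold adjEigs
  congr! 1
  congr!

variable {n : ℕ} (G : SimpleGraph (Fin n)) [DecidableRel G.Adj]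

lemma dotProduct_self_pos {y : Fin n → ℝ} (hy : y ≠ 0) : 0 < y ⬝ᵥ y := by
  rcases Function.ne_iff.mp hy with ⟨i, hi⟩
  have : (0:ℝ) < ∑ j, y j * y j := by
    apply Finset.sum_pos' (fun j _ => mul_self_nonneg _)
    exact ⟨i, Finset.mem_univ i, mul_self_pos.mpr hi⟩
  simpa [dotProduct] using this

lemma vec_of_eig (W : Finset (Fin n)) {μ : ℝ}
    (hμ : μ ∈ adjEigs (G.induce ((W : Finset (Fin n)) : Set (Fin n)))) (hbig : 2 < |μ|) :
    ∃ y : Fin n → ℝ, (∀ i, 0 ≤ y i) ∧ y ≠ 0 ∧ (∀ i, y i ≠ 0 → i ∈ W) ∧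
      2 * (y ⬝ᵥ y) < y ⬝ᵥ (G.adjMatrix ℝ *ᵥ y) := by
  classical
  rw [adjEigs_eq] at hμ
  obtain ⟨w, hw0, hww⟩ := exists_eigvec hμ
  set M := SimpleGraph.adjMatrix ℝ (G.induce ((W : Finset (Fin n)) : Set (Fin n))) with hMdef
  set A := G.adjMatrix ℝ with hA
  have hM : ∀ a b : ((W : Finset (Fin n)) : Set (Fin n)),
      M a b = A (↑a) (↑b) := by
    intro a b
    simp only [hMdef, hA, SimpleGraph.adjMatrix_apply, SimpleGraph.comap_adj,
      Function.Embedding.coe_subtype]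
  have hAnn : ∀ i j, 0 ≤ A i j := by
    intro i j
    by_cases h : G.Adj i j <;> simp [hA, SimpleGraph.adjMatrix_apply, h]
  set y : Fin n → ℝ := fun i => if h : i ∈ W then |w ⟨i, by simpa using h⟩| else 0 with hy
  have hynn : ∀ i, 0 ≤ y i := by
    intro i
    by_cases h : i ∈ W <;> simp [hy, h, abs_nonneg]
  have hsupp : ∀ i, y i ≠ 0 → i ∈ W := by
    intro i h
    by_contra hm
    rw [hy] at h
    simp [hm] at h
  have hyval : ∀ a : ((W : Finset (Fin n)) : Set (Fin n)), y ↑a = |w a| := by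
    intro a
    have ha : (a : Fin n) ∈ W := by simpa using a.2
    simp only [hy, ha, dif_pos]
  -- restricted sum lemma
  have hsum : ∀ g : Fin n → ℝ, (∀ i, i ∉ W → g i = 0) →
      ∑ i, g i = ∑ a : ((W : Finset (Fin n)) : Set (Fin n)), g ↑a := by
    intro g hg
    have h1 : ∑ i, g i = ∑ i ∈ W, g i :=
      (Finset.sum_subset (Finset.subset_univ W) (fun x _ hx => hg x hx)).symm
    rw [h1]
    exact Finset.sum_subtype W (fun x => by simp) g
  have hyne : y ≠ 0 := by
    rcases Function.ne_iff.mp hw0 with ⟨a, ha⟩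
    have : y ↑a ≠ 0 := by rw [hyval a]; simpa using ha
    exact Function.ne_iff.mpr ⟨↑a, this⟩
  refine ⟨y, hynn, hyne, hsupp, ?_⟩
  -- norms agree
  have hnorm : y ⬝ᵥ y = w ⬝ᵥ w := by
    have : ∀ i, i ∉ W → y i * y i = 0 := by
      intro i hi
      have : y i = 0 := by rw [hy]; simp [hi]
      rw [this]; ring
    calc y ⬝ᵥ y = ∑ i, y i * y i := rfl
      _ = ∑ a : ((W : Finset (Fin n)) : Set (Fin n)), y ↑a * y ↑a := hsum _ this
      _ = ∑ a : ((W : Finset (Fin n)) : Set (Fin n)), w a * w a := by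
          apply Finset.sum_congr rfl
          intro a _
          rw [hyval a, abs_mul_abs_self]
      _ = w ⬝ᵥ w := rfl
  have hwpos : 0 < w ⬝ᵥ w := by
    rcases Function.ne_iff.mp hw0 with ⟨a, ha⟩
    have : (0:ℝ) < ∑ b, w b * w b := by
      apply Finset.sum_pos' (fun j _ => mul_self_nonneg _)
      exact ⟨a, Finset.mem_univ a, mul_self_pos.mpr ha⟩
    simpa [dotProduct] using this
  -- eigen equation value
  have heig : w ⬝ᵥ (M *ᵥ w) = μ * (w ⬝ᵥ w) := by
    rw [hww, dotProduct_smul]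
    rfl
  -- expand both quadratic forms as double sums
  have hQy : y ⬝ᵥ (A *ᵥ y)
      = ∑ a : ((W : Finset (Fin n)) : Set (Fin n)),
          ∑ b : ((W : Finset (Fin n)) : Set (Fin n)), A ↑a ↑b * (|w a| * |w b|) := by
    have hout : ∀ i, i ∉ W → y i * (A *ᵥ y) i = 0 := by
      intro i hi
      have : y i = 0 := by rw [hy]; simp [hi]
      rw [this]; ring
    calc y ⬝ᵥ (A *ᵥ y) = ∑ i, y i * (A *ᵥ y) i := rfl
      _ = ∑ a : ((W : Finset (Fin n)) : Set (Fin n)), y ↑a * (A *ᵥ y) ↑a := hsum _ hout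
      _ = ∑ a : ((W : Finset (Fin n)) : Set (Fin n)),
            ∑ b : ((W : Finset (Fin n)) : Set (Fin n)), A ↑a ↑b * (|w a| * |w b|) := by
          apply Finset.sum_congr rfl
          intro a _
          have hin : ∀ j, j ∉ W → A ↑a j * y j = 0 := by
            intro j hj
            have : y j = 0 := by rw [hy]; simp [hj]
            rw [this]; ring
          calc y ↑a * (A *ᵥ y) ↑a = y ↑a * ∑ j, A ↑a j * y j := rfl
            _ = |w a| * ∑ b : ((W : Finset (Fin n)) : Set (Fin n)), A ↑a ↑b * y ↑b := by
                rw [hyval a, hsum _ hin]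
            _ = ∑ b : ((W : Finset (Fin n)) : Set (Fin n)), A ↑a ↑b * (|w a| * |w b|) := by
                rw [Finset.mul_sum]
                apply Finset.sum_congr rfl
                intro b _
                rw [hyval b]
                ring
  have hQw : w ⬝ᵥ (M *ᵥ w)
      = ∑ a : ((W : Finset (Fin n)) : Set (Fin n)),
          ∑ b : ((W : Finset (Fin n)) : Set (Fin n)), A ↑a ↑b * (w a * w b) := by
    calc w ⬝ᵥ (M *ᵥ w) = ∑ a, w a * ∑ b, M a b * w b := rfl
      _ = _ := by
        apply Finset.sum_congr rfl
        intro a _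
        rw [Finset.mul_sum]
        apply Finset.sum_congr rfl
        intro b _
        rw [hM a b]
        ring
  -- triangle inequality
  have habs : |w ⬝ᵥ (M *ᵥ w)| ≤ y ⬝ᵥ (A *ᵥ y) := by
    rw [hQw, hQy]
    calc |∑ a : ((W : Finset (Fin n)) : Set (Fin n)),
            ∑ b : ((W : Finset (Fin n)) : Set (Fin n)), A ↑a ↑b * (w a * w b)|
        ≤ ∑ a : ((W : Finset (Fin n)) : Set (Fin n)),
            |∑ b : ((W : Finset (Fin n)) : Set (Fin n)), A ↑a ↑b * (w a * w b)| :=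
          Finset.abs_sum_le_sum_abs _ _
      _ ≤ ∑ a : ((W : Finset (Fin n)) : Set (Fin n)),
            ∑ b : ((W : Finset (Fin n)) : Set (Fin n)), A ↑a ↑b * (|w a| * |w b|) := by
          apply Finset.sum_le_sum
          intro a _
          calc |∑ b : ((W : Finset (Fin n)) : Set (Fin n)), A ↑a ↑b * (w a * w b)|
              ≤ ∑ b : ((W : Finset (Fin n)) : Set (Fin n)), |A ↑a ↑b * (w a * w b)| :=
                Finset.abs_sum_le_sum_abs _ _
            _ = ∑ b : ((W : Finset (Fin n)) : Set (Fin n)), A ↑a ↑b * (|w a| * |w b|) := by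
                apply Finset.sum_congr rfl
                intro b _
                rw [abs_mul, abs_mul, abs_of_nonneg (hAnn ↑a ↑b)]
  have hfin : 2 * (w ⬝ᵥ w) < |μ| * (w ⬝ᵥ w) := by
    have := hwpos
    nlinarith
  rw [hnorm]
  calc 2 * (w ⬝ᵥ w) < |μ| * (w ⬝ᵥ w) := hfin
    _ = |μ * (w ⬝ᵥ w)| := by
        rw [abs_mul, abs_of_pos hwpos]
    _ = |w ⬝ᵥ (M *ᵥ w)| := by rw [heig]
    _ ≤ y ⬝ᵥ (A *ᵥ y) := habs

noncomputable def supp (y : Fin n → ℝ) : Finset (Fin n) :=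
  Finset.univ.filter (fun i => y i ≠ 0)

lemma mem_supp {y : Fin n → ℝ} {i : Fin n} : i ∈ supp y ↔ y i ≠ 0 := by
  simp [supp]

def Cohesive (S : Finset (Fin n)) : Prop :=
  ∀ T ⊆ S, T.Nonempty → T ≠ S → ∃ a ∈ T, ∃ b ∈ S, b ∉ T ∧ G.Adj a b

lemma refine_to_cohesive :
    ∀ (N : ℕ) (y : Fin n → ℝ), (supp y).card ≤ N →
    (∀ i, 0 ≤ y i) → y ≠ 0 → 2 * (y ⬝ᵥ y) < y ⬝ᵥ (G.adjMatrix ℝ *ᵥ y) →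
    ∃ x : Fin n → ℝ, (∀ i, 0 ≤ x i) ∧ x ≠ 0 ∧ (∀ i, x i ≠ 0 → y i ≠ 0) ∧
      2 * (x ⬝ᵥ x) < x ⬝ᵥ (G.adjMatrix ℝ *ᵥ x) ∧ Cohesive G (supp x) := by
  intro N
  induction N with
  | zero =>
    intro y hcard _ hne _
    exfalso
    rcases Function.ne_iff.mp hne with ⟨i, hi⟩
    have : i ∈ supp y := mem_supp.mpr hi
    have : 0 < (supp y).card := Finset.card_pos.mpr ⟨i, this⟩
    omega
  | succ N ih =>
    intro y hcard h0 hne hQ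
    by_cases hc : Cohesive G (supp y)
    · exact ⟨y, h0, hne, fun i h => h, hQ, hc⟩
    · rw [Cohesive] at hc
      push_neg at hc
      obtain ⟨T, hTs, hTne, hTne', hTedge⟩ := hc
      classical
      set A := G.adjMatrix ℝ with hA
      set y₁ : Fin n → ℝ := fun i => if i ∈ T then y i else 0 with hy₁
      set y₂ : Fin n → ℝ := fun i => if i ∈ T then 0 else y i with hy₂
      have hsplit : y = y₁ + y₂ := by
        funext i
        by_cases h : i ∈ T <;> simp [hy₁, hy₂, h]
      have hnoadj : ∀ i j, y₁ i ≠ 0 → y₂ j ≠ 0 → ¬ G.Adj i j := by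
        intro i j h1 h2 hadj
        have hiT : i ∈ T := by
          by_contra h; rw [hy₁] at h1; simp [h] at h1
        have hjS : j ∈ supp y := by
          rw [mem_supp]
          intro h
          rw [hy₂] at h2
          by_cases hjT : j ∈ T <;> simp [hjT, h] at h2
        have hjT : j ∉ T := by
          intro h; rw [hy₂] at h2; simp [h] at h2
        exact hTedge i hiT j hjS hjT hadj
      have hAz : ∀ i j, y₁ i ≠ 0 → y₂ j ≠ 0 → A i j = 0 := by
        intro i j h1 h2
        have := hnoadj i j h1 h2
        simp [hA, SimpleGraph.adjMatrix_apply, this]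
      have hAz' : ∀ i j, y₂ i ≠ 0 → y₁ j ≠ 0 → A i j = 0 := by
        intro i j h2 h1
        have := hnoadj j i h1 h2
        have : ¬ G.Adj i j := fun h => this h.symm
        simp [hA, SimpleGraph.adjMatrix_apply, this]
      -- vanishing cross terms
      have cross0 : ∀ (u v : Fin n → ℝ), (∀ i j, u i ≠ 0 → v j ≠ 0 → A i j = 0) →
          u ⬝ᵥ (A *ᵥ v) = 0 := by
        intro u v h
        apply Finset.sum_eq_zero
        intro i _
        by_cases hu : u i = 0
        · rw [hu]; ring
        · have : (A *ᵥ v) i = 0 := by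
            show (∑ j, A i j * v j) = 0
            apply Finset.sum_eq_zero
            intro j _
            by_cases hv : v j = 0
            · rw [hv]; ring
            · rw [h i j hu hv]; ring
          rw [this]; ring
      have hdot12 : y₁ ⬝ᵥ y₂ = 0 := by
        apply Finset.sum_eq_zero
        intro i _
        by_cases h : i ∈ T <;> simp [hy₁, hy₂, h]
      have hdot21 : y₂ ⬝ᵥ y₁ = 0 := by
        apply Finset.sum_eq_zero
        intro i _
        by_cases h : i ∈ T <;> simp [hy₁, hy₂, h]
      have hc1 : y₁ ⬝ᵥ (A *ᵥ y₂) = 0 := cross0 _ _ hAz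
      have hc2 : y₂ ⬝ᵥ (A *ᵥ y₁) = 0 := cross0 _ _ hAz'
      have hexp : y ⬝ᵥ (A *ᵥ y) = y₁ ⬝ᵥ (A *ᵥ y₁) + y₂ ⬝ᵥ (A *ᵥ y₂) := by
        simp only [hsplit, Matrix.mulVec_add, add_dotProduct, dotProduct_add]
        rw [hc1, hc2]
        ring
      have hnrm : y ⬝ᵥ y = y₁ ⬝ᵥ y₁ + y₂ ⬝ᵥ y₂ := by
        simp only [hsplit, add_dotProduct, dotProduct_add]
        rw [hdot12, hdot21]
        ring
      -- supports
      have hsupp1 : ∀ i, y₁ i ≠ 0 → y i ≠ 0 := by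
        intro i h
        rw [hy₁] at h
        by_cases hT : i ∈ T <;> simp [hT] at h ⊢ <;> tauto
      have hsupp2 : ∀ i, y₂ i ≠ 0 → y i ≠ 0 := by
        intro i h
        rw [hy₂] at h
        by_cases hT : i ∈ T <;> simp [hT] at h ⊢ <;> tauto
      -- each support is strictly smaller
      obtain ⟨a, haT⟩ := hTne
      have haS : a ∈ supp y := hTs haT
      obtain ⟨b, hbS, hbT⟩ : ∃ b ∈ supp y, b ∉ T := by
        by_contra h
        push_neg at h
        exact hTne' (Finset.Subset.antisymm hTs h)
      have hb1 : y₁ b = 0 := by rw [hy₁]; simp [hbT]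
      have ha2 : y₂ a = 0 := by rw [hy₂]; simp [haT]
      have hcard1 : (supp y₁).card ≤ N := by
        have hss : supp y₁ ⊂ supp y := by
          constructor
          · intro i hi
            exact mem_supp.mpr (hsupp1 i (mem_supp.mp hi))
          · intro hsub
            have := hsub hbS
            rw [mem_supp] at this
            exact this hb1
        have := Finset.card_lt_card hss
        omega
      have hcard2 : (supp y₂).card ≤ N := by
        have hss : supp y₂ ⊂ supp y := by
          constructor
          · intro i hi
            exact mem_supp.mpr (hsupp2 i (mem_supp.mp hi))
          · intro hsub
            have := hsub haS
            rw [mem_supp] at this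
            exact this ha2
        have := Finset.card_lt_card hss
        omega
      have h01 : ∀ i, 0 ≤ y₁ i := by
        intro i; rw [hy₁]; by_cases h : i ∈ T <;> simp [h, h0 i]
      have h02 : ∀ i, 0 ≤ y₂ i := by
        intro i; rw [hy₂]; by_cases h : i ∈ T <;> simp [h, h0 i]
      -- one of the two parts has positive excess
      have : (2 * (y₁ ⬝ᵥ y₁) < y₁ ⬝ᵥ (A *ᵥ y₁)) ∨ (2 * (y₂ ⬝ᵥ y₂) < y₂ ⬝ᵥ (A *ᵥ y₂)) := by
        by_contra h
        push_neg at h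
        rw [hexp, hnrm] at hQ
        linarith [h.1, h.2]
      rcases this with hQ1 | hQ1
      · have hne1 : y₁ ≠ 0 := by
          intro h
          rw [h] at hQ1
          simp [zero_dotProduct, dotProduct_zero] at hQ1
        obtain ⟨x, hx0, hxne, hxs, hxQ, hxc⟩ := ih y₁ hcard1 h01 hne1 hQ1
        exact ⟨x, hx0, hxne, fun i h => hsupp1 i (hxs i h), hxQ, hxc⟩
      · have hne1 : y₂ ≠ 0 := by
          intro h
          rw [h] at hQ1
          simp [zero_dotProduct, dotProduct_zero] at hQ1
        obtain ⟨x, hx0, hxne, hxs, hxQ, hxc⟩ := ih y₂ hcard2 h02 hne1 hQ1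
        exact ⟨x, hx0, hxne, fun i h => hsupp2 i (hxs i h), hxQ, hxc⟩


end Graphs

section Tree

variable {n : ℕ} {G : SimpleGraph (Fin n)}

lemma path_length (hT : G.IsTree) {a b : Fin n} (p : G.Walk a b) (hp : p.IsPath) :
    p.length = G.dist a b := by
  obtain ⟨q, hq, hql⟩ := hT.isConnected.exists_path_of_dist a b
  rw [(hT.existsUnique_path a b).unique hp hq, hql]

lemma dist_split (hT : G.IsTree) {a b c : Fin n} (p : G.Walk a b) (hp : p.IsPath)
    (hc : c ∈ p.support) : G.dist a c + G.dist c b = G.dist a b := by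
  have hspec := p.take_spec hc
  have h1 : (p.takeUntil c hc).IsPath := hp.takeUntil hc
  have h2 : (p.dropUntil c hc).IsPath := hp.dropUntil hc
  have hlen := congrArg SimpleGraph.Walk.length hspec
  rw [SimpleGraph.Walk.length_append] at hlen
  rw [← path_length hT _ hp, ← path_length hT _ h1, ← path_length hT _ h2]
  exact hlen

lemma dist_ne_of_adj (hT : G.IsTree) {a b : Fin n} (c : Fin n) (hadj : G.Adj a b) :
    G.dist c a ≠ G.dist c b := by
  intro heq
  obtain ⟨p, hp, hpl⟩ := hT.isConnected.exists_path_of_dist c b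
  by_cases ha : a ∈ p.support
  · have hsplit := dist_split hT p hp ha
    have h1 : G.dist a b = 1 := SimpleGraph.dist_eq_one_iff_adj.mpr hadj
    have h2 : G.dist a b ≠ 0 := by omega
    omega
  · have hnot : a ∉ p.reverse.support := by
      simpa [SimpleGraph.Walk.support_reverse] using ha
    have hq : (SimpleGraph.Walk.cons hadj p.reverse).IsPath := hp.reverse.cons hnot
    have hq' : (SimpleGraph.Walk.cons hadj p.reverse).reverse.IsPath := hq.reverse
    have hlen := path_length hT _ hq'
    rw [SimpleGraph.Walk.length_reverse, SimpleGraph.Walk.length_cons,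
      SimpleGraph.Walk.length_reverse] at hlen
    omega

lemma adj_dist_cases (hT : G.IsTree) {a b : Fin n} (c : Fin n) (hadj : G.Adj a b) :
    G.dist c b = G.dist c a + 1 ∨ G.dist c a = G.dist c b + 1 := by
  have h3 : G.dist a b = 1 := SimpleGraph.dist_eq_one_iff_adj.mpr hadj
  have h3' : G.dist b a = 1 := by rw [SimpleGraph.dist_comm]; exact h3
  have h1 : G.dist c b ≤ G.dist c a + G.dist a b := hT.isConnected.dist_triangle
  have h2 : G.dist c a ≤ G.dist c b + G.dist b a := hT.isConnected.dist_triangle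
  have h4 := dist_ne_of_adj hT c hadj
  omega

/-- `u` is the neighbour of `t` in the direction of `s`. -/
def Br (G : SimpleGraph (Fin n)) (t u s : Fin n) : Prop :=
  G.Adj t u ∧ G.dist u s + 1 = G.dist t s

lemma br_exists (hT : G.IsTree) {t s : Fin n} (hts : t ≠ s) : ∃ u, Br G t u s := by
  have hd0 : G.dist t s ≠ 0 :=
    SimpleGraph.dist_ne_zero_iff_ne_and_reachable.mpr ⟨hts, hT.isConnected t s⟩
  obtain ⟨p, hp, hpl⟩ := hT.isConnected.exists_path_of_dist t s
  have hlen : 0 < p.length := by omega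
  have hadj : G.Adj t (p.getVert 1) := by
    have := p.adj_getVert_succ (i := 0) hlen
    simpa [p.getVert_zero] using this
  refine ⟨p.getVert 1, hadj, ?_⟩
  have hmem : p.getVert 1 ∈ p.support :=
    SimpleGraph.Walk.mem_support_iff_exists_getVert.mpr ⟨1, rfl, by omega⟩
  have hsplit := dist_split hT p hp hmem
  have h1 : G.dist t (p.getVert 1) = 1 := SimpleGraph.dist_eq_one_iff_adj.mpr hadj
  omega

lemma br_unique (hT : G.IsTree) {t s u₁ u₂ : Fin n} (h1 : Br G t u₁ s) (h2 : Br G t u₂ s) :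
    u₁ = u₂ := by
  obtain ⟨ha1, hd1⟩ := h1
  obtain ⟨ha2, hd2⟩ := h2
  obtain ⟨p₁, hp₁, hl₁⟩ := hT.isConnected.exists_path_of_dist u₁ s
  obtain ⟨p₂, hp₂, hl₂⟩ := hT.isConnected.exists_path_of_dist u₂ s
  have ht1 : t ∉ p₁.support := by
    intro hmem
    have hsp := dist_split hT p₁ hp₁ hmem
    have : G.dist u₁ t = 1 := SimpleGraph.dist_eq_one_iff_adj.mpr ha1.symm
    omega
  have ht2 : t ∉ p₂.support := by
    intro hmem
    have hsp := dist_split hT p₂ hp₂ hmem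
    have : G.dist u₂ t = 1 := SimpleGraph.dist_eq_one_iff_adj.mpr ha2.symm
    omega
  have hW : (SimpleGraph.Walk.cons ha1 p₁) = (SimpleGraph.Walk.cons ha2 p₂) :=
    (hT.existsUnique_path t s).unique (hp₁.cons ht1) (hp₂.cons ht2)
  have := congrArg (fun w => SimpleGraph.Walk.getVert w 1) hW
  simpa [SimpleGraph.Walk.getVert_cons_succ, SimpleGraph.Walk.getVert_zero] using this

lemma br_local (hT : G.IsTree) {t u a b : Fin n} (hadj : G.Adj a b) (hat : a ≠ t)
    (hbt : b ≠ t) (hu : Br G t u a) : Br G t u b := by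
  obtain ⟨htu, hdu⟩ := hu
  have hdtu : G.dist t u = 1 := SimpleGraph.dist_eq_one_iff_adj.mpr htu
  have hab1 : G.dist a b = 1 := SimpleGraph.dist_eq_one_iff_adj.mpr hadj
  have hba1 : G.dist b a = 1 := by rw [SimpleGraph.dist_comm]; exact hab1
  rcases adj_dist_cases hT t hadj with h | h
  · refine ⟨htu, ?_⟩
    have htr1 : G.dist u b ≤ G.dist u a + G.dist a b := hT.isConnected.dist_triangle
    have htr2 : G.dist t b ≤ G.dist t u + G.dist u b := hT.isConnected.dist_triangle
    omega
  · obtain ⟨u', hu'⟩ := br_exists hT hbt.symm (s := b)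
    have key : Br G t u' a := by
      obtain ⟨htu', hdu'⟩ := hu'
      refine ⟨htu', ?_⟩
      have hdtu' : G.dist t u' = 1 := SimpleGraph.dist_eq_one_iff_adj.mpr htu'
      have htr1 : G.dist u' a ≤ G.dist u' b + G.dist b a := hT.isConnected.dist_triangle
      have htr2 : G.dist t a ≤ G.dist t u' + G.dist u' a := hT.isConnected.dist_triangle
      omega
    have heq : u' = u := br_unique hT key ⟨htu, hdu⟩
    rw [← heq]
    exact hu'

lemma desc_step (hT : G.IsTree) {r t a b : Fin n}
    (hDesc : G.dist r a = G.dist r t + G.dist t a) (hat : a ≠ t) (hadj : G.Adj a b) :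
    G.dist r b = G.dist r t + G.dist t b := by
  by_cases hbt : b = t
  · subst hbt
    simp [SimpleGraph.dist_self]
  have hab1 : G.dist a b = 1 := SimpleGraph.dist_eq_one_iff_adj.mpr hadj
  have hba1 : G.dist b a = 1 := by rw [SimpleGraph.dist_comm]; exact hab1
  rcases adj_dist_cases hT t hadj with h1 | h1 <;> rcases adj_dist_cases hT r hadj with h2 | h2
  · -- d t b = d t a + 1, d r b = d r a + 1
    omega
  · -- d t b = d t a + 1, d r a = d r b + 1 : contradiction
    exfalso
    have har : a ≠ r := by
      intro hh
      subst hh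
      have : G.dist a a = 0 := SimpleGraph.dist_self
      omega
    obtain ⟨u', hu'⟩ := br_exists hT hat (s := t)
    have hBru' : Br G a u' r := by
      obtain ⟨hau', hdu'⟩ := hu'
      refine ⟨hau', ?_⟩
      have hdau' : G.dist a u' = 1 := SimpleGraph.dist_eq_one_iff_adj.mpr hau'
      have htr1 : G.dist u' r ≤ G.dist u' t + G.dist t r := hT.isConnected.dist_triangle
      have htr2 : G.dist a r ≤ G.dist a u' + G.dist u' r := hT.isConnected.dist_triangle
      have hc1 : G.dist t r = G.dist r t := SimpleGraph.dist_comm ..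
      have hc2 : G.dist a r = G.dist r a := SimpleGraph.dist_comm ..
      have hc3 : G.dist a t = G.dist t a := SimpleGraph.dist_comm ..
      omega
    have hBrb : Br G a b r := by
      refine ⟨hadj, ?_⟩
      have hc1 : G.dist b r = G.dist r b := SimpleGraph.dist_comm ..
      have hc2 : G.dist a r = G.dist r a := SimpleGraph.dist_comm ..
      omega
    have heq : u' = b := br_unique hT hBru' hBrb
    subst heq
    have h5 := hu'.2
    have hc4 : G.dist u' t = G.dist t u' := SimpleGraph.dist_comm ..
    have hc5 : G.dist a t = G.dist t a := SimpleGraph.dist_comm ..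
    omega
  · -- d t a = d t b + 1, d r b = d r a + 1 : contradiction by triangle
    exfalso
    have htr : G.dist r b ≤ G.dist r t + G.dist t b := hT.isConnected.dist_triangle
    omega
  · -- d t a = d t b + 1, d r a = d r b + 1
    omega

lemma desc_of_min (hT : G.IsTree) {S : Finset (Fin n)} (hco : Cohesive G S) {r t₀ : Fin n}
    (ht₀ : t₀ ∈ S) (hmin : ∀ s ∈ S, G.dist r t₀ ≤ G.dist r s) :
    ∀ s ∈ S, G.dist r s = G.dist r t₀ + G.dist t₀ s := by
  classical
  by_contra hcon
  push_neg at hcon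
  obtain ⟨s₁, hs₁S, hs₁⟩ := hcon
  set P := S.filter (fun s => G.dist r s = G.dist r t₀ + G.dist t₀ s) with hP
  have ht₀P : t₀ ∈ P := by
    simp [hP, ht₀, SimpleGraph.dist_self]
  have hPS : P ⊆ S := Finset.filter_subset _ _
  have hPneq : P ≠ S := by
    intro h
    have : s₁ ∈ P := h ▸ hs₁S
    rw [hP, Finset.mem_filter] at this
    exact hs₁ this.2
  obtain ⟨a, haP, b, hbS, hbP, hadj⟩ := hco P hPS ⟨t₀, ht₀P⟩ hPneq
  have haD : G.dist r a = G.dist r t₀ + G.dist t₀ a := (Finset.mem_filter.mp haP).2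
  have hbD : G.dist r b = G.dist r t₀ + G.dist t₀ b := by
    by_cases hat : a = t₀
    · subst hat
      have h1 : G.dist a b = 1 := SimpleGraph.dist_eq_one_iff_adj.mpr hadj
      rcases adj_dist_cases hT r hadj with h | h
      · omega
      · have := hmin b hbS
        omega
    · exact desc_step hT haD hat hadj
  exact hbP (Finset.mem_filter.mpr ⟨hbS, hbD⟩)

lemma br_const (hT : G.IsTree) {S : Finset (Fin n)} (hco : Cohesive G S) {t : Fin n}
    (htS : t ∉ S) (hSne : S.Nonempty) : ∃ u, ∀ s ∈ S, Br G t u s := by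
  classical
  obtain ⟨s₀, hs₀⟩ := hSne
  have hts₀ : t ≠ s₀ := fun h => htS (h ▸ hs₀)
  obtain ⟨u, hu⟩ := br_exists hT hts₀
  refine ⟨u, ?_⟩
  by_contra hcon
  push_neg at hcon
  obtain ⟨s₁, hs₁S, hs₁⟩ := hcon
  set P := S.filter (fun s => Br G t u s) with hP
  have hs₀P : s₀ ∈ P := by simp [hP, hs₀, hu]
  have hPS : P ⊆ S := Finset.filter_subset _ _
  have hPneq : P ≠ S := by
    intro h
    have : s₁ ∈ P := h ▸ hs₁S
    rw [hP, Finset.mem_filter] at this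
    exact hs₁ this.2
  obtain ⟨a, haP, b, hbS, hbP, hadj⟩ := hco P hPS ⟨s₀, hs₀P⟩ hPneq
  have haBr : Br G t u a := (Finset.mem_filter.mp haP).2
  have hat : a ≠ t := fun h => htS (h ▸ hPS haP)
  have hbt : b ≠ t := fun h => htS (h ▸ hbS)
  exact hbP (Finset.mem_filter.mpr ⟨hbS, br_local hT hadj hat hbt haBr⟩)

lemma desc_along_walk (hT : G.IsTree) {r t : Fin n} {x y : Fin n} (w : G.Walk x y)
    (hsup : ∀ v ∈ w.support, v ≠ t)
    (hx : G.dist r x = G.dist r t + G.dist t x) :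
    G.dist r y = G.dist r t + G.dist t y := by
  induction w with
  | nil => exact hx
  | @cons x' v y' hadj p ih =>
    apply ih
    · intro z hz
      exact hsup z (by simp [SimpleGraph.Walk.support_cons, hz])
    · apply desc_step hT hx ?_ hadj
      exact hsup x' (by simp [SimpleGraph.Walk.support_cons])

lemma desc_of_br (hT : G.IsTree) {r t s u p : Fin n} (hp : Br G t p r) (hu : Br G t u s)
    (hup : u ≠ p) : G.dist r s = G.dist r t + G.dist t s := by
  have htu1 : G.dist t u = 1 := SimpleGraph.dist_eq_one_iff_adj.mpr hu.1
  have hut1 : G.dist u t = 1 := by rw [SimpleGraph.dist_comm]; exact htu1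
  have hDu : G.dist r u = G.dist r t + G.dist t u := by
    rcases adj_dist_cases hT r hu.1 with h | h
    · omega
    · exfalso
      have hBur : Br G t u r := by
        refine ⟨hu.1, ?_⟩
        have hc1 : G.dist u r = G.dist r u := SimpleGraph.dist_comm ..
        have hc2 : G.dist t r = G.dist r t := SimpleGraph.dist_comm ..
        omega
      exact hup (br_unique hT hBur hp)
  obtain ⟨w, hw, hwl⟩ := hT.isConnected.exists_path_of_dist u s
  apply desc_along_walk hT w ?_ hDu
  intro v hv
  intro heq
  subst heq
  have hsp := dist_split hT w hw hv
  have := hu.2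
  omega


end Tree

end SalemAux

open Matrix Finset SimpleGraph SalemAux

/-- Every Salem tree (a tree with exactly one eigenvalue greater than 2) either has a
vertex whose deletion leaves a cyclotomic forest, or an edge whose two endvertices'
deletion leaves a cyclotomic forest. -/
theorem salem_tree_structure {n : ℕ} (G : SimpleGraph (Fin n)) (hT : G.IsTree)
    (hS : Multiset.card ((adjEigs G).filter (fun μ => 2 < μ)) = 1) :
    (∃ v : Fin n,
      ∀ μ ∈ adjEigs (G.induce ((({v}ᶜ : Finset (Fin n)) : Set (Fin n)))),
        -2 ≤ μ ∧ μ ≤ 2) ∨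
    (∃ u v : Fin n, G.Adj u v ∧
      ∀ μ ∈ adjEigs (G.induce ((({u, v}ᶜ : Finset (Fin n)) : Set (Fin n)))),
        -2 ≤ μ ∧ μ ≤ 2) := by
  classical
  by_contra hcon
  push_neg at hcon
  obtain ⟨hv, he⟩ := hcon
  letI : DecidableRel G.Adj := Classical.decRel _
  set A := G.adjMatrix ℝ with hA
  have hherm : A.IsHermitian := by
    show Aᴴ = A
    ext i j
    by_cases h : G.Adj i j
    · have h' : G.Adj j i := h.symm
      simp [hA, Matrix.conjTranspose_apply, SimpleGraph.adjMatrix_apply, h, h']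
    · have h' : ¬ G.Adj j i := fun hh => h hh.symm
      simp [hA, Matrix.conjTranspose_apply, SimpleGraph.adjMatrix_apply, h, h']
  have hroots : adjEigs G = Finset.univ.val.map hherm.eigenvalues := by
    rw [adjEigs_eq, roots_charpoly _ hherm]
  have hcount : Multiset.card (((Finset.univ.val.map hherm.eigenvalues)).filter
      (fun μ => 2 < μ)) ≤ 1 := by
    rw [← hroots, hS]
  -- a generic producer of "good" vectors
  have hGood : ∀ (W : Finset (Fin n)) (μ : ℝ),
      μ ∈ adjEigs (G.induce ((W : Finset (Fin n)) : Set (Fin n))) → (-2 ≤ μ → 2 < μ) →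
      ∃ x : Fin n → ℝ, (∀ i, 0 ≤ x i) ∧ x ≠ 0 ∧ (∀ i, x i ≠ 0 → i ∈ W) ∧
        2 * (x ⬝ᵥ x) < x ⬝ᵥ (A *ᵥ x) ∧ Cohesive G (supp x) := by
    intro W μ hμ hout
    have habs : 2 < |μ| := by
      by_cases h : (-2 : ℝ) ≤ μ
      · have := hout h
        calc (2:ℝ) < μ := this
          _ ≤ |μ| := le_abs_self μ
      · push_neg at h
        calc (2:ℝ) < -μ := by linarith
          _ ≤ |μ| := neg_le_abs μ
    obtain ⟨y, hy0, hyne, hysupp, hyQ⟩ := vec_of_eig G W hμ habs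
    obtain ⟨x, hx0, hxne, hxs, hxQ, hxc⟩ :=
      refine_to_cohesive G (supp y).card y le_rfl hy0 hyne hyQ
    exact ⟨x, hx0, hxne, fun i h => hysupp i (hxs i h), hxQ, hxc⟩
  have hconn := hT.isConnected
  haveI hnonempty : Nonempty (Fin n) := hconn.nonempty
  set r : Fin n := Classical.arbitrary (Fin n) with hr
  -- good vectors avoiding a vertex
  have hGoodV : ∀ v : Fin n, ∃ x : Fin n → ℝ, (∀ i, 0 ≤ x i) ∧ x ≠ 0 ∧
      (∀ i, x i ≠ 0 → i ≠ v) ∧ 2 * (x ⬝ᵥ x) < x ⬝ᵥ (A *ᵥ x) ∧ Cohesive G (supp x) := by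
    intro v
    obtain ⟨μ, hμ, hout⟩ := hv v
    obtain ⟨x, h0, hne, hsup, hQ, hc⟩ := hGood ({v}ᶜ) μ hμ hout
    refine ⟨x, h0, hne, ?_, hQ, hc⟩
    intro i h
    have := hsup i h
    simpa using this
  -- good vectors avoiding an edge
  have hGoodE : ∀ u v : Fin n, G.Adj u v → ∃ x : Fin n → ℝ, (∀ i, 0 ≤ x i) ∧ x ≠ 0 ∧
      (∀ i, x i ≠ 0 → i ≠ u ∧ i ≠ v) ∧ 2 * (x ⬝ᵥ x) < x ⬝ᵥ (A *ᵥ x) ∧ Cohesive G (supp x) := by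
    intro u v hadj
    obtain ⟨μ, hμ, hout⟩ := he u v hadj
    obtain ⟨x, h0, hne, hsup, hQ, hc⟩ := hGood ({u, v}ᶜ) μ hμ hout
    refine ⟨x, h0, hne, ?_, hQ, hc⟩
    intro i h
    have := hsup i h
    simp only [Finset.mem_compl, Finset.mem_insert, Finset.mem_singleton] at this
    push_neg at this
    exact this
  -- the "minimum depth" predicate
  set B : ℕ := Finset.univ.sup (G.dist r) with hB
  set P : ℕ → Prop := fun m => ∃ x : Fin n → ℝ, ((∀ i, 0 ≤ x i) ∧ x ≠ 0 ∧
      2 * (x ⬝ᵥ x) < x ⬝ᵥ (A *ᵥ x) ∧ Cohesive G (supp x)) ∧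
      (∃ t ∈ supp x, G.dist r t = m ∧ ∀ s ∈ supp x, m ≤ G.dist r s) with hP
  -- every good vector gives an instance of P
  have hPexists : ∀ x : Fin n → ℝ, (∀ i, 0 ≤ x i) → x ≠ 0 →
      2 * (x ⬝ᵥ x) < x ⬝ᵥ (A *ᵥ x) → Cohesive G (supp x) →
      ∃ m t, P m ∧ t ∈ supp x ∧ G.dist r t = m ∧ (∀ s ∈ supp x, m ≤ G.dist r s) ∧ m ≤ B := by
    intro x h0 hne hQ hc
    have hsne : (supp x).Nonempty := by
      rcases Function.ne_iff.mp hne with ⟨i, hi⟩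
      exact ⟨i, mem_supp.mpr hi⟩
    obtain ⟨t, htmem, htmin⟩ := Finset.exists_min_image (supp x) (G.dist r) hsne
    refine ⟨G.dist r t, t, ⟨x, ⟨h0, hne, hQ, hc⟩, ⟨t, htmem, rfl, htmin⟩⟩, htmem, rfl, htmin, ?_⟩
    exact Finset.le_sup (Finset.mem_univ t)
  -- the maximal min-depth
  set M : ℕ := Nat.findGreatest P B with hM
  have hPM : P M := by
    obtain ⟨x₀, h0, hne, hs, hQ, hc⟩ := hGoodV r
    obtain ⟨m, t, hPm, _, _, _, hmB⟩ := hPexists x₀ h0 hne hQ hc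
    exact Nat.findGreatest_spec hmB hPm
  obtain ⟨xstar, ⟨hst0, hstne, hstQ, hstc⟩, t, htmem, htdepth, htmin⟩ := hPM
  -- all of supp xstar lies below t
  have hdesc : ∀ s ∈ supp xstar, G.dist r s = M + G.dist t s := by
    intro s hs
    have := desc_of_min hT hstc htmem (fun s hs => htdepth ▸ htmin s hs) s hs
    omega
  -- t ≠ r
  have htr : t ≠ r := by
    intro h
    obtain ⟨x, h0, hne, hsup, hQ, hc⟩ := hGoodV t
    obtain ⟨m, t', hPm, ht'm, ht'd, _, hmB⟩ := hPexists x h0 hne hQ hc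
    have hle : m ≤ M := Nat.le_findGreatest hmB hPm
    have ht't : t' ≠ t := hsup t' (mem_supp.mp ht'm)
    have hd0 : G.dist r t' ≠ 0 := fun hh =>
      ht't ((((hconn.dist_eq_zero_iff).mp hh).symm).trans h.symm)
    have hM0 : M = 0 := by
      rw [← htdepth, h, SimpleGraph.dist_self]
    omega
  -- the parent of t
  obtain ⟨p, hp⟩ := br_exists hT htr
  have hadj_tp : G.Adj t p := hp.1
  -- a good vector avoiding the edge {t, p}
  obtain ⟨x', h'0, h'ne, h'sup, h'Q, h'c⟩ := hGoodE t p hadj_tp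
  have h'ne_t : t ∉ supp x' := fun h => (h'sup t (mem_supp.mp h)).1 rfl
  have h'sne : (supp x').Nonempty := by
    rcases Function.ne_iff.mp h'ne with ⟨i, hi⟩
    exact ⟨i, mem_supp.mpr hi⟩
  obtain ⟨u', hu'⟩ := br_const hT h'c h'ne_t h'sne
  -- u' must equal p, else all of supp x' is strictly deeper than M
  have hu'p : u' = p := by
    by_contra hne'
    obtain ⟨m, t', hPm, ht'm, ht'd, _, hmB⟩ := hPexists x' h'0 h'ne h'Q h'c
    have hle : m ≤ M := Nat.le_findGreatest hmB hPm
    have hdesc' : G.dist r t' = G.dist r t + G.dist t t' :=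
      desc_of_br hT hp (hu' t' ht'm) hne'
    have ht't : t' ≠ t := fun h => h'ne_t (h ▸ ht'm)
    have : G.dist t t' ≠ 0 := fun hh => ht't (((hconn.dist_eq_zero_iff).mp hh).symm)
    omega
  rw [hu'p] at hu'
  -- key distance facts
  have hrp : G.dist p r + 1 = G.dist t r := hp.2
  have hrp' : G.dist r p + 1 = G.dist r t := by
    have h1 : G.dist p r = G.dist r p := SimpleGraph.dist_comm ..
    have h2 : G.dist t r = G.dist r t := SimpleGraph.dist_comm ..
    omega
  have hps : ∀ s ∈ supp xstar, s ≠ t → G.dist t s + 1 ≤ G.dist p s := by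
    intro s hs hst
    have h1 := hdesc s hs
    have h2 : G.dist r s ≤ G.dist r p + G.dist p s := hconn.dist_triangle
    have h3 : G.dist r t = M := htdepth
    omega
  -- supports are disjoint and non-adjacent
  have hnad : ∀ s ∈ supp xstar, ∀ s' ∈ supp x', s ≠ s' ∧ ¬ G.Adj s s' := by
    intro s hs s' hs'
    have hbr' : Br G t p s' := hu' s' hs'
    have hs't : s' ≠ t := fun h => h'ne_t (h ▸ hs')
    have hs'p : s' ≠ p := fun h => (h'sup s' (mem_supp.mp hs')).2 h
    constructor
    · intro h
      subst h
      by_cases hst : s = t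
      · exact hs't hst
      · have := hps s hs hst
        have := hbr'.2
        omega
    · intro hadj
      by_cases hst : s = t
      · subst hst
        have h1 : G.dist s s' = 1 := SimpleGraph.dist_eq_one_iff_adj.mpr hadj
        have h2 := hbr'.2
        have h3 : G.dist p s' = 0 := by omega
        exact hs'p (((hconn.dist_eq_zero_iff).mp h3).symm)
      · have hbrs : Br G t p s := br_local hT hadj.symm hs't hst hbr'
        have := hps s hs hst
        have := hbrs.2
        omega
  -- contradiction via the two-positive-directions lemma
  have hdot : xstar ⬝ᵥ x' = 0 := by
    apply Finset.sum_eq_zero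
    intro i _
    by_cases h1 : xstar i = 0
    · rw [h1]; ring
    · have h2 : x' i = 0 := by
        by_contra h2
        exact ((hnad i (mem_supp.mpr h1) i (mem_supp.mpr h2)).1) rfl
      rw [h2]; ring
  have hAdot : xstar ⬝ᵥ (A *ᵥ x') = 0 := by
    apply Finset.sum_eq_zero
    intro i _
    by_cases h1 : xstar i = 0
    · rw [h1]; ring
    · have h2 : (A *ᵥ x') i = 0 := by
        show (∑ j, A i j * x' j) = 0
        apply Finset.sum_eq_zero
        intro j _
        by_cases h3 : x' j = 0
        · rw [h3]; ring
        · have := (hnad i (mem_supp.mpr h1) j (mem_supp.mpr h3)).2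
          have hz : A i j = 0 := by
            simp [hA, SimpleGraph.adjMatrix_apply, this]
          rw [hz]; ring
      rw [h2]; ring
  exact no_two_positive hherm hcount hstQ h'Q hdot hAdot
end
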